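/- arXiv:1305.6376 — 4 statements merged into one kernel-verified Lean document; each statement's English description precedes it below -/
import Mathlib

section
/- For every d ≥ 2 and h ≥ 2, there exists a fractional pebbling of the balanced d-ary tree of height h that starts with no pebbles, ends with no pebbles, at some time has pebble weight 1 on the root, and such that at every time the total pebble weight on the tree is at most (d−1)·h/2 + 1. -/
/-- Number of nodes of the complete d-ary tree of height h (levels 0..h-1). -/
def treeSize (d h : ℕ) : ℕ := ∑ k ∈ Finset.range h, d ^ k

/-- A fractional configuration: each node gets (black weight, white weight). -/
abbrev Cfg := ℕ → ℝ × ℝ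

/-- Pebble weight of node i: b(i) + w(i). -/
def pw (c : Cfg) (i : ℕ) : ℝ := (c i).1 + (c i).2

/-- Valid configuration: weights nonnegative, b(i)+w(i) ≤ 1, nothing outside the tree. -/
def Valid (n : ℕ) (c : Cfg) : Prop :=
  (∀ i, 0 ≤ (c i).1 ∧ 0 ≤ (c i).2 ∧ pw c i ≤ 1) ∧ (∀ i, n ≤ i → c i = (0, 0))

/-- Total pebble weight of a configuration. -/
def weight (n : ℕ) (c : Cfg) : ℝ := ∑ i ∈ Finset.range n, pw c i

/-- j is a child of i in heap indexing of the d-ary tree. -/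
def child (d i j : ℕ) : Prop := ∃ k, k < d ∧ j = d * i + 1 + k

def isLeaf (d n i : ℕ) : Prop := i < n ∧ n ≤ d * i + 1

/-- Every child of i has pebble weight 1. -/
def covered (d : ℕ) (c : Cfg) (i : ℕ) : Prop := ∀ j, child d i j → pw c j = 1

/-- Legal fractional pebbling moves: decrease black weight on any node; on a node
whose children all have pebble weight 1, set its white weight to 0 and increase its
black weight arbitrarily, optionally simultaneously decreasing children's black
weights (sliding); increase white weight on any node (subject to validity);
increase black weight on any leaf. -/
def Move (d n : ℕ) (c c' : Cfg) : Prop :=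
  (∃ i, (c' i).1 ≤ (c i).1 ∧ (c' i).2 = (c i).2 ∧ ∀ j, j ≠ i → c' j = c j) ∨
  (∃ i, i < n ∧ covered d c i ∧ (c i).1 ≤ (c' i).1 ∧ (c' i).2 = 0 ∧
    (∀ j, child d i j → (c' j).1 ≤ (c j).1 ∧ (c' j).2 = (c j).2) ∧
    (∀ j, j ≠ i → ¬ child d i j → c' j = c j)) ∨
  (∃ i, (c' i).1 = (c i).1 ∧ (c i).2 ≤ (c' i).2 ∧ ∀ j, j ≠ i → c' j = c j) ∨
  (∃ i, isLeaf d n i ∧ (c' i).2 = (c i).2 ∧ (c i).1 ≤ (c' i).1 ∧ ∀ j, j ≠ i → c' j = c j)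

/-- A fractional pebbling: valid configurations connected by legal moves. -/
def Pebbling (d n T : ℕ) (c : ℕ → Cfg) : Prop :=
  (∀ t, t ≤ T → Valid n (c t)) ∧ (∀ t, t < T → Move d n (c t) (c (t + 1)))

def EmptyCfg (c : Cfg) : Prop := ∀ i, c i = (0, 0)

/-- Root-pebbling: starts and ends empty; at some time the root has pebble weight 1. -/
def RootPebbling (d n T : ℕ) (c : ℕ → Cfg) : Prop :=
  Pebbling d n T c ∧ EmptyCfg (c 0) ∧ EmptyCfg (c T) ∧ ∃ t, t ≤ T ∧ pw (c t) 0 = 1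


namespace FracProof
open Finset

/-! ### Arithmetic about tree sizes -/

abbrev S (d l : ℕ) : ℕ := treeSize d l

lemma S_zero (d : ℕ) : S d 0 = 0 := by simp [S, treeSize]

lemma S_one (d : ℕ) : S d 1 = 1 := by simp [S, treeSize]

lemma S_succ (d l : ℕ) : S d (l + 1) = d * S d l + 1 := by
  have : ∀ m, S d (m+1) = d * S d m + 1 := by
    intro m
    simp only [S, treeSize]
    rw [Finset.sum_range_succ' (fun k => d ^ k)]
    simp [pow_succ, Finset.mul_sum, mul_comm]
  exact this l

lemma S_lt_succ {d : ℕ} (hd : 1 ≤ d) (l : ℕ) : S d l < S d (l + 1) := by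
  rw [S_succ]
  have : S d l ≤ d * S d l := Nat.le_mul_of_pos_left _ hd
  omega

lemma S_mono {d : ℕ} (hd : 1 ≤ d) : StrictMono (S d) :=
  strictMono_nat_of_lt_succ (S_lt_succ hd)

lemma S_le {d a b : ℕ} (hd : 1 ≤ d) (h : a ≤ b) : S d a ≤ S d b :=
  (S_mono hd).monotone h

lemma S_add (d a r : ℕ) : S d (a + r) = S d r + d ^ r * S d a := by
  induction r with
  | zero => simp [S_zero]
  | succ r ih =>
      have h1 : a + (r+1) = (a + r) + 1 := by omega
      rw [h1, S_succ, ih, S_succ, pow_succ]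
      ring

lemma geom {d : ℕ} (hd : 1 ≤ d) (r : ℕ) : S d r + d ^ r = d * S d r + 1 := by
  induction r with
  | zero => simp [S_zero]
  | succ r ih =>
      rw [S_succ, pow_succ]
      nlinarith [ih]

/-- exists level of any natural number -/
lemma exists_level {d : ℕ} (hd : 1 ≤ d) (i : ℕ) : ∃ l, S d l ≤ i ∧ i < S d (l + 1) := by
  induction i with
  | zero => exact ⟨0, by simp [S_zero, S_one]⟩
  | succ i ih =>
      obtain ⟨l, h1, h2⟩ := ih
      by_cases h : i + 1 < S d (l + 1)
      · exact ⟨l, by omega, h⟩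
      · refine ⟨l + 1, by omega, ?_⟩
        have h3 : S d (l+1+1) = d * S d (l+1) + 1 := S_succ d (l+1)
        have h4 : S d (l+1) ≤ d * S d (l+1) := Nat.le_mul_of_pos_left _ hd
        omega

lemma level_unique {d : ℕ} (hd : 1 ≤ d) {a b i : ℕ}
    (ha1 : S d a ≤ i) (ha2 : i < S d (a+1)) (hb1 : S d b ≤ i) (hb2 : i < S d (b+1)) :
    a = b := by
  rcases lt_trichotomy a b with h | h | h
  · have := S_le hd (show a + 1 ≤ b by omega); omega
  · exact h
  · have := S_le hd (show b + 1 ≤ a by omega); omega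

/-! ### Subtrees -/

/-- `i` belongs to the subtree rooted at `v` (heap indexing, including fictional
nodes outside the tree). -/
def inSub (d v i : ℕ) : Prop := ∃ r, d ^ r * v + S d r ≤ i ∧ i < d ^ r * v + S d r + d ^ r

lemma inSub_self (d v : ℕ) : inSub d v v := ⟨0, by simp [S_zero]⟩

lemma inSub_child {d v m : ℕ} (hm : m < d) : inSub d v (d * v + 1 + m) :=
  ⟨1, by simp [S_one, pow_one]; omega⟩

lemma inSub_of_child {d v m i : ℕ} (hd : 1 ≤ d) (hm : m < d)
    (h : inSub d (d * v + 1 + m) i) : inSub d v i := by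
  obtain ⟨r, h1, h2⟩ := h
  have hg : S d r + d ^ r = d * S d r + 1 := geom hd r
  have e1 : d ^ r * (d * v + 1 + m) = d ^ (r+1) * v + d ^ r * (1 + m) := by ring
  have hS : S d (r+1) = d * S d r + 1 := S_succ d r
  have e2 : d ^ (r+1) = d * d ^ r := by ring
  have hlow : d ^ r ≤ d ^ r * (1 + m) := Nat.le_mul_of_pos_right _ (by omega)
  have hhigh : d ^ r * (1 + m) ≤ d ^ r * d := Nat.mul_le_mul_left _ (by omega)
  refine ⟨r + 1, ?_, ?_⟩
  · -- d^(r+1) * v + S d (r+1) ≤ i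
    have : d ^ (r+1) * v + S d (r+1) ≤ d ^ r * (d*v+1+m) + S d r := by
      rw [e1, hS]; omega
    omega
  · have : d ^ r * (d*v+1+m) + S d r + d ^ r ≤ d ^ (r+1) * v + S d (r+1) + d ^ (r+1) := by
      rw [e1, hS, e2]
      have : d ^ r * d = d * d ^ r := by ring
      omega
    omega

/-- membership at a known level : block containment -/
lemma inSub_level {d v i l : ℕ} (hd : 1 ≤ d) (hv1 : S d l ≤ v) (hv2 : v < S d (l+1))
    (h : inSub d v i) : ∃ r, d ^ r * v + S d r ≤ i ∧ i < d ^ r * v + S d r + d ^ r ∧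
      S d (l + r) ≤ i ∧ i < S d (l + r + 1) := by
  obtain ⟨r, h1, h2⟩ := h
  refine ⟨r, h1, h2, ?_, ?_⟩
  · have e0 : S d (l + r) = S d r + d ^ r * S d l := S_add d l r
    have e1 : d ^ r * S d l ≤ d ^ r * v := Nat.mul_le_mul_left _ hv1
    omega
  · have e1 : S d (l + r + 1) = S d r + d ^ r * S d (l+1) := by
      have : l + r + 1 = (l+1) + r := by omega
      rw [this, S_add]
    have h5 : d ^ r * (v + 1) ≤ d ^ r * S d (l+1) := Nat.mul_le_mul_left _ (by omega)
    have h6 : d ^ r * (v+1) = d ^ r * v + d ^ r := by ring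
    omega

/-- subtrees of distinct siblings are disjoint -/
lemma child_level {d v l m : ℕ} (hv1 : S d l ≤ v) (hv2 : v < S d (l+1))
    (hm : m < d) : S d (l+1) ≤ d*v+1+m ∧ d*v+1+m < S d (l+1+1) := by
  constructor
  · rw [S_succ]
    have : d * S d l ≤ d * v := Nat.mul_le_mul_left _ hv1
    omega
  · have h2 : S d (l+1+1) = d * S d (l+1) + 1 := S_succ d (l+1)
    have : d * (v+1) ≤ d * S d (l+1) := Nat.mul_le_mul_left _ (by omega)
    have : d * (v+1) = d * v + d := by ring
    omega

lemma sib_disjoint {d v l m m' i : ℕ} (hd : 1 ≤ d) (hv1 : S d l ≤ v) (hv2 : v < S d (l+1))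
    (hm : m < d) (hm' : m' < d) (hne : m ≠ m')
    (h1 : inSub d (d*v+1+m) i) (h2 : inSub d (d*v+1+m') i) : False := by
  obtain ⟨hu1, hu2⟩ := child_level hv1 hv2 hm
  obtain ⟨hu1', hu2'⟩ := child_level hv1 hv2 hm'
  obtain ⟨r, hr1, hr2, hr3, hr4⟩ := inSub_level hd hu1 (by omega : d*v+1+m < S d ((l+1)+1)) h1
  obtain ⟨q, hq1, hq2, hq3, hq4⟩ := inSub_level hd hu1' (by omega : d*v+1+m' < S d ((l+1)+1)) h2
  have hrq : r = q := by
    have := level_unique hd hr3 (by omega : i < S d ((l+1+r)+1)) hq3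
      (by omega : i < S d ((l+1+q)+1))
    omega
  subst hrq
  rcases Nat.lt_or_ge m m' with h | h
  · have : d ^ r * (d*v+1+m) + d ^ r ≤ d ^ r * (d*v+1+m') := by
      have : d ^ r * (d*v+1+m+1) ≤ d ^ r * (d*v+1+m') := Nat.mul_le_mul_left _ (by omega)
      have e : d ^ r * (d*v+1+m+1) = d ^ r * (d*v+1+m) + d ^ r := by ring
      omega
    omega
  · have hlt : m' < m := by omega
    have : d ^ r * (d*v+1+m') + d ^ r ≤ d ^ r * (d*v+1+m) := by
      have : d ^ r * (d*v+1+m'+1) ≤ d ^ r * (d*v+1+m) := Nat.mul_le_mul_left _ (by omega)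
      have e : d ^ r * (d*v+1+m'+1) = d ^ r * (d*v+1+m') + d ^ r := by ring
      omega
    omega

/-- `v` is not in the subtree of its child. -/
lemma not_inSub_child_self {d v l m : ℕ} (hd : 1 ≤ d) (hv1 : S d l ≤ v) (hv2 : v < S d (l+1))
    (hm : m < d) : ¬ inSub d (d*v+1+m) v := by
  intro h
  obtain ⟨hu1, hu2⟩ := child_level hv1 hv2 hm
  obtain ⟨r, hr1, hr2, hr3, hr4⟩ := inSub_level hd hu1 (by omega : d*v+1+m < S d ((l+1)+1)) h
  have := level_unique hd hv1 hv2 hr3 (by omega : v < S d ((l+1+r)+1))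
  omega

/-- Decomposition: a proper member of subtree(v) is in the subtree of some child. -/
lemma inSub_decomp {d v i : ℕ} (hd : 1 ≤ d) (h : inSub d v i) (hne : i ≠ v) :
    ∃ m, m < d ∧ inSub d (d*v+1+m) i := by
  obtain ⟨r, h1, h2⟩ := h
  rcases Nat.eq_zero_or_pos r with rfl | hr
  · simp [S_zero] at h1 h2; omega
  obtain ⟨q, rfl⟩ : ∃ q, r = q + 1 := ⟨r - 1, by omega⟩
  obtain ⟨x, hxe⟩ : ∃ x, i = d ^ (q+1) * v + S d (q+1) + x :=
    ⟨i - (d ^ (q+1) * v + S d (q+1)), by omega⟩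
  have hxlt : x < d ^ (q+1) := by omega
  obtain ⟨y, z, hyz, hzlt⟩ : ∃ y z, x = d ^ q * y + z ∧ z < d ^ q :=
    ⟨x / d ^ q, x % d ^ q, (Nat.div_add_mod x (d ^ q)).symm,
      Nat.mod_lt _ (by positivity)⟩
  have hpow : d ^ (q+1) = d ^ q * d := pow_succ d q
  have hy : y < d := by
    by_contra hc
    have : d ^ q * d ≤ d ^ q * y := Nat.mul_le_mul_left _ (by omega)
    omega
  have hg : S d q + d ^ q = d * S d q + 1 := geom hd q
  have hS : S d (q+1) = d * S d q + 1 := S_succ d q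
  have hkey : d ^ q * (d * v + 1 + y) + S d q
      = d ^ (q+1) * v + S d (q+1) + d ^ q * y := by
    have e1 : d ^ q * (d * v + 1 + y) = d ^ (q+1) * v + d ^ q + d ^ q * y := by ring
    omega
  exact ⟨y, hy, ⟨q, by omega, by omega⟩⟩

/-- every node is in the subtree of the root -/
lemma inSub_zero {d : ℕ} (hd : 1 ≤ d) (i : ℕ) : inSub d 0 i := by
  obtain ⟨l, h1, h2⟩ := exists_level hd i
  have hg : S d l + d ^ l = d * S d l + 1 := geom hd l
  have hS : S d (l+1) = d * S d l + 1 := S_succ d l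
  exact ⟨l, by simpa using h1, by simp; omega⟩

end FracProof
namespace FracProof
open Finset

/-! ### Weight bookkeeping -/

lemma weight_diff {n : ℕ} (c c' : Cfg) (s : Finset ℕ) (hs : s ⊆ Finset.range n)
    (h : ∀ j ∉ s, c' j = c j) :
    weight n c' = weight n c + ∑ j ∈ s, (pw c' j - pw c j) := by
  have key : ∑ j ∈ s, (pw c' j - pw c j) = ∑ j ∈ Finset.range n, (pw c' j - pw c j) := by
    apply Finset.sum_subset hs
    intro j _ hj
    rw [pw, pw, h j hj]
    ring
  rw [key, weight, weight, ← Finset.sum_add_distrib]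
  apply Finset.sum_congr rfl
  intro j _
  ring

lemma weight_update {n i : ℕ} (hi : i < n) (c : Cfg) (p : ℝ × ℝ) :
    weight n (Function.update c i p) = weight n c + (p.1 + p.2) - pw c i := by
  have h0 : ({i} : Finset ℕ) ⊆ Finset.range n := by
    simp [Finset.singleton_subset_iff, Finset.mem_range, hi]
  have := weight_diff (n := n) c (Function.update c i p) {i} h0
    (by intro j hj; simp at hj; simp [Function.update, hj])
  rw [this, Finset.sum_singleton]
  have e1 : pw (Function.update c i p) i = p.1 + p.2 := by simp [pw, Function.update]
  rw [e1]; ring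

lemma valid_update {n i : ℕ} {c : Cfg} (hv : Valid n c) (hi : i < n) {p : ℝ × ℝ}
    (h1 : 0 ≤ p.1) (h2 : 0 ≤ p.2) (h3 : p.1 + p.2 ≤ 1) :
    Valid n (Function.update c i p) := by
  constructor
  · intro j
    rcases eq_or_ne j i with rfl | hne
    · simpa [pw, Function.update] using ⟨h1, h2, h3⟩
    · simpa [pw, Function.update, hne] using hv.1 j
  · intro j hj
    have : j ≠ i := by omega
    simpa [Function.update, this] using hv.2 j hj

/-! ### Reachability with weight bound -/

def Reach (d n : ℕ) (W : ℝ) (c c' : Cfg) : Prop :=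
  ∃ (T : ℕ) (f : ℕ → Cfg), f 0 = c ∧ f T = c' ∧ (∀ t, t ≤ T → Valid n (f t)) ∧
    (∀ t, t ≤ T → weight n (f t) ≤ W) ∧ (∀ t, t < T → Move d n (f t) (f (t + 1)))

lemma Reach.refl {d n : ℕ} {W : ℝ} {c : Cfg} (hv : Valid n c) (hw : weight n c ≤ W) :
    Reach d n W c c :=
  ⟨0, fun _ => c, rfl, rfl, fun _ _ => hv, fun _ _ => hw, fun t ht => by omega⟩

lemma Reach.single {d n : ℕ} {W : ℝ} {c c' : Cfg} (hm : Move d n c c')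
    (hv : Valid n c) (hv' : Valid n c') (hw : weight n c ≤ W) (hw' : weight n c' ≤ W) :
    Reach d n W c c' := by
  refine ⟨1, fun t => if t = 0 then c else c', by simp, by simp, ?_, ?_, ?_⟩
  · intro t _; by_cases h : t = 0 <;> simp [h, hv, hv']
  · intro t _; by_cases h : t = 0 <;> simp [h, hw, hw']
  · intro t ht
    have : t = 0 := by omega
    simp [this, hm]

lemma Reach.trans {d n : ℕ} {W : ℝ} {c c' c'' : Cfg}
    (h1 : Reach d n W c c') (h2 : Reach d n W c' c'') : Reach d n W c c'' := by
  obtain ⟨T1, f1, e10, e1T, v1, w1, m1⟩ := h1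
  obtain ⟨T2, f2, e20, e2T, v2, w2, m2⟩ := h2
  refine ⟨T1 + T2, fun t => if t < T1 then f1 t else f2 (t - T1), by
      rcases Nat.eq_zero_or_pos T1 with h | h
      · simp [h, e20, ← e10, ← e1T, h]
      · simp [h, e10], by
      have : ¬ (T1 + T2 < T1) := by omega
      simp [this, e2T], ?_, ?_, ?_⟩
  · intro t ht
    by_cases h : t < T1
    · simp [h]; exact v1 t (by omega)
    · simp [h]; exact v2 (t - T1) (by omega)
  · intro t ht
    by_cases h : t < T1
    · simp [h]; exact w1 t (by omega)
    · simp [h]; exact w2 (t - T1) (by omega)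
  · intro t ht
    by_cases h : t + 1 < T1
    · simp [h, show t < T1 by omega]; exact m1 t (by omega)
    · by_cases h2 : t < T1
      · -- t + 1 = T1
        have hT : t + 1 = T1 := by omega
        simp only [if_pos h2, if_neg h]
        have e : f2 (t + 1 - T1) = f1 (t + 1) := by
          rw [show t + 1 - T1 = 0 by omega, e20, ← e1T, hT]
        rw [e]
        exact m1 t (by omega)
      · simp [h, h2]
        have e : t + 1 - T1 = (t - T1) + 1 := by omega
        rw [e]
        exact m2 (t - T1) (by omega)

lemma Reach.mono {d n : ℕ} {W W' : ℝ} {c c' : Cfg} (h : Reach d n W c c') (hW : W ≤ W') :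
    Reach d n W' c c' := by
  obtain ⟨T, f, e0, eT, v, w, m⟩ := h
  exact ⟨T, f, e0, eT, v, fun t ht => le_trans (w t ht) hW, m⟩

end FracProof
namespace FracProof
open Finset

lemma child_iff {d v j : ℕ} : child d v j ↔ (d*v+1 ≤ j ∧ j ≤ d*v+d) := by
  constructor
  · rintro ⟨k, hk, rfl⟩; omega
  · rintro ⟨h1, h2⟩; exact ⟨j - (d*v+1), by omega, by omega⟩

/-! ### Single-node moves as Reach steps -/

lemma reach_white {d n i : ℕ} {c : Cfg} {w' W : ℝ} (hv : Valid n c) (hi : i < n)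
    (hw : (c i).2 ≤ w') (h1 : (c i).1 + w' ≤ 1)
    (hW : weight n c ≤ W) (hW' : weight n c + (w' - (c i).2) ≤ W) :
    Reach d n W c (Function.update c i ((c i).1, w')) := by
  have hv' : Valid n (Function.update c i ((c i).1, w')) :=
    valid_update hv hi (hv.1 i).1 (le_trans (hv.1 i).2.1 hw) h1
  refine Reach.single ?_ hv hv' hW ?_
  · refine Or.inr (Or.inr (Or.inl ⟨i, ?_, ?_, ?_⟩))
    · simp [Function.update]
    · simp [Function.update]; exact hw
    · intro j hj; simp [Function.update, hj]
  · rw [weight_update hi]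
    rw [pw]; simp; linarith

lemma reach_blackdec {d n i : ℕ} {c : Cfg} {b' W : ℝ} (hv : Valid n c) (hi : i < n)
    (hb0 : 0 ≤ b') (hb : b' ≤ (c i).1)
    (hW : weight n c ≤ W) :
    Reach d n W c (Function.update c i (b', (c i).2)) := by
  have hv' : Valid n (Function.update c i (b', (c i).2)) := by
    refine valid_update hv hi hb0 (hv.1 i).2.1 ?_
    have := (hv.1 i).2.2; rw [pw] at this; simp; linarith
  refine Reach.single ?_ hv hv' hW ?_
  · refine Or.inl ⟨i, ?_, ?_, ?_⟩
    · simp [Function.update]; exact hb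
    · simp [Function.update]
    · intro j hj; simp [Function.update, hj]
  · rw [weight_update hi]
    rw [pw]; simp
    linarith

lemma reach_leaf {d n i : ℕ} {c : Cfg} {b' W : ℝ} (hv : Valid n c) (hleaf : isLeaf d n i)
    (hb : (c i).1 ≤ b') (h1 : b' + (c i).2 ≤ 1)
    (hW : weight n c ≤ W) (hW' : weight n c + (b' - (c i).1) ≤ W) :
    Reach d n W c (Function.update c i (b', (c i).2)) := by
  have hv' : Valid n (Function.update c i (b', (c i).2)) :=
    valid_update hv hleaf.1 (le_trans (hv.1 i).1 hb) (hv.1 i).2.1 h1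
  refine Reach.single ?_ hv hv' hW ?_
  · refine Or.inr (Or.inr (Or.inr ⟨i, hleaf, ?_, ?_, ?_⟩))
    · simp [Function.update]
    · simp [Function.update]; exact hb
    · intro j hj; simp [Function.update, hj]
  · rw [weight_update hleaf.1]
    rw [pw]; simp; linarith

/-! ### The slide move -/

def slideCfg (d v : ℕ) (β : ℝ) (c : Cfg) : Cfg := fun i =>
  if i = v then (β, 0) else if d*v+1 ≤ i ∧ i ≤ d*v+d then (0, (c i).2) else c i

lemma slideCfg_self {d v : ℕ} {β : ℝ} {c : Cfg} (hd : 1 ≤ d) :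
    slideCfg d v β c v = (β, 0) := by simp [slideCfg]

lemma slideCfg_child {d v m : ℕ} {β : ℝ} {c : Cfg} (hm : m < d) :
    slideCfg d v β c (d*v+1+m) = (0, (c (d*v+1+m)).2) := by
  have hdv : v ≤ d * v := Nat.le_mul_of_pos_left v (by omega)
  have h1 : ¬ (d*v+1+m = v) := by omega
  simp [slideCfg, h1]
  intro h2; omega

lemma slideCfg_other {d v i : ℕ} {β : ℝ} {c : Cfg} (h1 : i ≠ v)
    (h2 : ¬ (d*v+1 ≤ i ∧ i ≤ d*v+d)) :
    slideCfg d v β c i = c i := by simp [slideCfg, h1, h2]; intro h3 h4; omega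

lemma Icc_children (d v : ℕ) :
    Finset.Icc (d*v+1) (d*v+d) = (Finset.range d).image (fun m => d*v+1+m) := by
  ext a
  simp only [Finset.mem_Icc, Finset.mem_image, Finset.mem_range]
  constructor
  · rintro ⟨h1, h2⟩; exact ⟨a - (d*v+1), by omega, by omega⟩
  · rintro ⟨m, hm, rfl⟩; omega

lemma weight_slide {d n v : ℕ} {β : ℝ} {c : Cfg} (hd : 1 ≤ d) (hv : v < n) (hch : d*v+d < n) :
    weight n (slideCfg d v β c) = weight n c + β - pw c v
      - ∑ m ∈ Finset.range d, (c (d*v+1+m)).1 := by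
  have hdv : v ≤ d * v := Nat.le_mul_of_pos_left v hd
  have hsub : insert v (Finset.Icc (d*v+1) (d*v+d)) ⊆ Finset.range n := by
    intro a ha
    simp only [Finset.mem_insert, Finset.mem_Icc] at ha
    simp only [Finset.mem_range]
    omega
  have hvout : v ∉ Finset.Icc (d*v+1) (d*v+d) := by simp [Finset.mem_Icc]; omega
  have := weight_diff (n := n) c (slideCfg d v β c) _ hsub (by
    intro j hj
    simp only [Finset.mem_insert, Finset.mem_Icc] at hj
    push_neg at hj
    exact slideCfg_other hj.1 (by intro hc; exact absurd hc (by omega)))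
  rw [this, Finset.sum_insert hvout]
  have e1 : pw (slideCfg d v β c) v - pw c v = β - pw c v := by
    have hd1 : slideCfg d v β c v = (β, 0) := by simp [slideCfg]
    rw [pw, hd1]; simp
  rw [e1, Icc_children, Finset.sum_image (by intro a _ b _ h; simp only at h; omega)]
  have e2 : ∀ m ∈ Finset.range d,
      pw (slideCfg d v β c) (d*v+1+m) - pw c (d*v+1+m) = -(c (d*v+1+m)).1 := by
    intro m hm
    simp only [Finset.mem_range] at hm
    rw [pw, pw, slideCfg_child hm]
    simp
  rw [Finset.sum_congr rfl e2]
  simp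
  ring

lemma valid_slide {d n v : ℕ} {β : ℝ} {c : Cfg} (hv : Valid n c) (hvn : v < n) (hch : d*v+d < n)
    (hb0 : 0 ≤ β) (hb1 : β ≤ 1) :
    Valid n (slideCfg d v β c) := by
  constructor
  · intro i
    by_cases h1 : i = v
    · subst h1; simp [pw, slideCfg]; exact ⟨hb0, hb1⟩
    · by_cases h2 : d*v+1 ≤ i ∧ i ≤ d*v+d
      · have : slideCfg d v β c i = (0, (c i).2) := by simp [slideCfg, h1, h2]
        rw [pw, this]
        have h3 := (hv.1 i)
        rw [pw] at h3
        simp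
        constructor
        · exact h3.2.1
        · linarith [h3.1, h3.2.2]
      · rw [pw, slideCfg_other h1 h2]
        exact hv.1 i
  · intro i hi
    have h1 : i ≠ v := by omega
    have h2 : ¬ (d*v+1 ≤ i ∧ i ≤ d*v+d) := by omega
    rw [slideCfg_other h1 h2]
    exact hv.2 i hi

lemma move_slide {d n v : ℕ} {β : ℝ} {c : Cfg} (hd : 1 ≤ d) (hv : Valid n c) (hvn : v < n)
    (hcov : covered d c v) (hb : (c v).1 ≤ β) :
    Move d n c (slideCfg d v β c) := by
  have hdv : v ≤ d * v := Nat.le_mul_of_pos_left v hd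
  refine Or.inr (Or.inl ⟨v, hvn, hcov, ?_, ?_, ?_, ?_⟩)
  · simp [slideCfg]; exact hb
  · simp [slideCfg]
  · intro j hj
    rw [child_iff] at hj
    have h1 : j ≠ v := by omega
    have : slideCfg d v β c j = (0, (c j).2) := by simp [slideCfg, h1, hj]
    rw [this]
    exact ⟨by simpa using (hv.1 j).1, rfl⟩
  · intro j hj1 hj2
    rw [child_iff] at hj2
    exact slideCfg_other hj1 (by omega)

end FracProof
namespace FracProof
open Finset

/-! ### Numeric bounds -/

noncomputable def Bnd (d k : ℕ) : ℝ := ((d:ℝ) - 1) * k / 2 + 1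

noncomputable def pl (d k : ℕ) : ℝ := ((d:ℝ) - 1) * ((k - 2 : ℕ) : ℝ) / 2

lemma pl_le_two {d k : ℕ} (hk : k ≤ 2) : pl d k = 0 := by
  have : k - 2 = 0 := by omega
  simp [pl, this]

lemma pl_nonneg {d k : ℕ} (hd : 1 ≤ d) : 0 ≤ pl d k := by
  have h1 : (1:ℝ) ≤ (d:ℝ) := by exact_mod_cast hd
  have h2 : (0:ℝ) ≤ ((k-2:ℕ):ℝ) := by positivity
  have : (0:ℝ) ≤ (d:ℝ) - 1 := by linarith
  rw [pl]; positivity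

lemma Bnd_succ {d k : ℕ} (hk : 1 ≤ k) : Bnd d k = Bnd d (k-1) + ((d:ℝ)-1)/2 := by
  rw [Bnd, Bnd]
  have : ((k-1:ℕ):ℝ) = (k:ℝ) - 1 := by
    have : (1:ℕ) ≤ k := hk
    push_cast [this]; ring
  rw [this]; ring

lemma pl_succ {d k : ℕ} (hk : 3 ≤ k) : pl d k = pl d (k-1) + ((d:ℝ)-1)/2 := by
  rw [pl, pl]
  have e1 : ((k-2:ℕ):ℝ) = ((k:ℝ) - 2) := by
    have : (2:ℕ) ≤ k := by omega
    push_cast [this]; ring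
  have e2 : ((k-1-2:ℕ):ℝ) = ((k:ℝ) - 3) := by
    have e3 : k - 1 - 2 = k - 3 := by omega
    rw [e3]
    have : (3:ℕ) ≤ k := hk
    push_cast [this]; ring
  rw [e1, e2]; ring

lemma pl_add_d {d k : ℕ} (hk : 2 ≤ k) : pl d k + (d:ℝ) = Bnd d k := by
  rw [pl, Bnd]
  have e1 : ((k-2:ℕ):ℝ) = ((k:ℝ) - 2) := by
    push_cast [hk]; ring
  rw [e1]; ring

lemma Bnd_ge_one {d k : ℕ} (hd : 1 ≤ d) : 1 ≤ Bnd d k := by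
  have h1 : (1:ℝ) ≤ (d:ℝ) := by exact_mod_cast hd
  have h2 : (0:ℝ) ≤ (k:ℝ) := by positivity
  rw [Bnd]
  nlinarith

lemma d_pl_le_Bnd {d k : ℕ} (hd : 1 ≤ d) (hk : 2 ≤ k) :
    (d:ℝ) + pl d (k-1) ≤ Bnd d k := by
  rcases Nat.lt_or_ge k 3 with h | h
  · have hk2 : k = 2 := by omega
    subst hk2
    rw [pl_le_two (by norm_num), ← pl_add_d (by norm_num), pl_le_two (by norm_num)]
    simp
  · have e1 : pl d (k-1) + (d:ℝ) = Bnd d (k-1) := pl_add_d (by omega)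
    have e2 : Bnd d k = Bnd d (k-1) + ((d:ℝ)-1)/2 := Bnd_succ (by omega)
    have h1 : (1:ℝ) ≤ (d:ℝ) := by exact_mod_cast hd
    linarith

/-! ### Subtree state descriptions -/

def SubE (d : ℕ) (c : Cfg) (v : ℕ) : Prop := ∀ i, inSub d v i → i ≠ v → c i = (0,0)

def PileP (d : ℕ) (c : Cfg) : ℕ → ℕ → Prop
  | 0, v => SubE d c v
  | 1, v => SubE d c v
  | 2, v => SubE d c v
  | (k+3), v => (∀ m, m < d - 1 → c (d*v+1+m) = (0, 1/2) ∧ SubE d c (d*v+1+m)) ∧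
      c (d*v+1+(d-1)) = (0,0) ∧ PileP d c (k+2) (d*v+1+(d-1))

lemma PileP_one {d : ℕ} {c : Cfg} {v : ℕ} : PileP d c 1 v ↔ SubE d c v := Iff.rfl
lemma PileP_two {d : ℕ} {c : Cfg} {v : ℕ} : PileP d c 2 v ↔ SubE d c v := Iff.rfl

lemma inSub_ge {d u i : ℕ} (hd : 1 ≤ d) (h : inSub d u i) : u ≤ i := by
  obtain ⟨r, h1, h2⟩ := h
  have : u ≤ d ^ r * u := Nat.le_mul_of_pos_left u (by positivity)
  omega

lemma SubE_congr {d : ℕ} {c c' : Cfg} {v : ℕ}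
    (h : ∀ i, inSub d v i → i ≠ v → c' i = c i) (hs : SubE d c v) : SubE d c' v := by
  intro i hi hne
  rw [h i hi hne]; exact hs i hi hne

lemma SubE_of_child {d : ℕ} {c : Cfg} {v m : ℕ} (hd : 1 ≤ d) (hm : m < d)
    (hs : SubE d c v) : c (d*v+1+m) = (0,0) ∧ SubE d c (d*v+1+m) := by
  have hdv : v ≤ d * v := Nat.le_mul_of_pos_left v hd
  constructor
  · exact hs _ (inSub_child hm) (by omega)
  · intro i hi hne
    have h2 : inSub d v i := inSub_of_child hd hm hi
    have h3 : d*v+1+m ≤ i := inSub_ge hd hi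
    exact hs i h2 (by omega)

lemma PileP_congr {d : ℕ} {c c' : Cfg} (hd : 1 ≤ d) :
    ∀ (k : ℕ) (v : ℕ), (∀ i, inSub d v i → i ≠ v → c' i = c i) → PileP d c k v →
      PileP d c' k v
  | 0, v, h, hp => SubE_congr h hp
  | 1, v, h, hp => SubE_congr h hp
  | 2, v, h, hp => SubE_congr h hp
  | (k+3), v, h, hp => by
    have hdv : v ≤ d * v := Nat.le_mul_of_pos_left v hd
    obtain ⟨h1, h2, h3⟩ := hp
    refine ⟨?_, ?_, ?_⟩
    · intro m hm
      have hmd : m < d := by omega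
      refine ⟨?_, ?_⟩
      · rw [h _ (inSub_child hmd) (by omega)]; exact (h1 m hm).1
      · refine SubE_congr ?_ (h1 m hm).2
        intro i hi hne
        have := inSub_ge hd hi
        exact h i (inSub_of_child hd hmd hi) (by omega)
    · rw [h _ (inSub_child (by omega)) (by omega)]; exact h2
    · refine PileP_congr hd (k+2) _ ?_ h3
      intro i hi hne
      have := inSub_ge hd hi
      exact h i (inSub_of_child hd (by omega) hi) (by omega)

/-! ### Levels -/

def lev (d h k v : ℕ) : Prop := S d (h - k) ≤ v ∧ v < S d (h - k + 1)

lemma lev_child {d h k v m : ℕ} (hk : 1 ≤ k) (hkh : k ≤ h) (hv : lev d h k v)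
    (hm : m < d) : lev d h (k-1) (d*v+1+m) := by
  obtain ⟨h1, h2⟩ := child_level hv.1 hv.2 hm
  have e : h - (k-1) = h - k + 1 := by omega
  exact ⟨by rw [e]; exact h1, by rw [e]; exact h2⟩

lemma lev_lt_n {d h k v : ℕ} (hd : 1 ≤ d) (hk : 1 ≤ k) (hkh : k ≤ h) (hv : lev d h k v) :
    v < S d h := by
  have := S_le hd (show h - k + 1 ≤ h by omega)
  have := hv.2
  omega

lemma lev_child_lt_n {d h k v : ℕ} (hd : 1 ≤ d) (hk : 2 ≤ k) (hkh : k ≤ h)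
    (hv : lev d h k v) : d*v+d < S d h := by
  have h1 : lev d h (k-1) (d*v+1+(d-1)) := lev_child (by omega) hkh hv (by omega)
  have h2 : d*v+1+(d-1) < S d h := lev_lt_n hd (by omega) (by omega) h1
  omega

lemma lev_leaf {d h v : ℕ} (hd : 1 ≤ d) (hh : 1 ≤ h) (hv : lev d h 1 v) :
    isLeaf d (S d h) v := by
  obtain ⟨h1, h2⟩ := hv
  have e : h - 1 + 1 = h := by omega
  rw [e] at h2
  refine ⟨h2, ?_⟩
  have e2 : S d h = d * S d (h-1) + 1 := by
    conv_lhs => rw [← e]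
    exact S_succ d (h-1)
  have : d * S d (h-1) ≤ d * v := Nat.mul_le_mul_left _ h1
  omega

end FracProof
namespace FracProof
open Finset

lemma sib_loop {d n : ℕ} (hd : 1 ≤ d) {v l : ℕ} (hv1 : S d l ≤ v) (hv2 : v < S d (l+1))
    (fromV toV : ℝ × ℝ) (P q : ℝ)
    (prov : ∀ u c, (∃ m, m < d ∧ u = d*v+1+m) → Valid n c → c u = fromV → SubE d c u →
      ∃ c', Reach d n (weight n c + P) c c' ∧ Valid n c' ∧
        (∀ i, ¬ inSub d u i → c' i = c i) ∧ c' u = toV ∧ SubE d c' u ∧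
        weight n c' = weight n c + q) :
    ∀ (M : ℕ), M ≤ d → ∀ (W : ℝ) (c : Cfg), Valid n c →
      (∀ j, j < M → c (d*v+1+j) = fromV ∧ SubE d c (d*v+1+j)) →
      weight n c ≤ W → (∀ j : ℕ, j < M → weight n c + j * q + P ≤ W) →
      ∃ c', Reach d n W c c' ∧ Valid n c' ∧
        (∀ i, (∀ j, j < M → ¬ inSub d (d*v+1+j) i) → c' i = c i) ∧
        (∀ j, j < M → c' (d*v+1+j) = toV ∧ SubE d c' (d*v+1+j)) ∧
        weight n c' = weight n c + M * q := by
  intro M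
  induction M with
  | zero =>
      intro _ W c hvc hst hW0 _
      exact ⟨c, Reach.refl hvc hW0, hvc, fun i _ => rfl, fun j hj => by omega, by simp⟩
  | succ M ih =>
      intro hM W c hvc hst hW0 hq
      obtain ⟨c1, hr1, hv1c, hoff1, hst1, hw1⟩ :=
        ih (by omega) W c hvc (fun j hj => hst j (by omega)) hW0
          (fun j hj => hq j (by omega))
      have hdisj : ∀ j i, j < M → inSub d (d*v+1+j) i → inSub d (d*v+1+M) i → False := by
        intro j i hj hij hiM
        exact sib_disjoint hd hv1 hv2 (by omega) (by omega) (by omega) hij hiM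
      have hcM : c1 (d*v+1+M) = fromV := by
        rw [hoff1 _ (fun j hj hin => hdisj j _ hj hin (inSub_self _ _))]
        exact (hst M (by omega)).1
      have hsM : SubE d c1 (d*v+1+M) := by
        refine SubE_congr ?_ (hst M (by omega)).2
        intro i hi _
        exact hoff1 _ (fun j hj hin => hdisj j _ hj hin hi)
      obtain ⟨c2, hr2, hv2c, hoff2, hend2, hsub2, hw2⟩ :=
        prov (d*v+1+M) c1 ⟨M, by omega, rfl⟩ hv1c hcM hsM
      have hr2' : Reach d n W c1 c2 := by
        refine hr2.mono ?_
        rw [hw1]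
        exact hq M (by omega)
      refine ⟨c2, hr1.trans hr2', hv2c, ?_, ?_, ?_⟩
      · intro i hi
        rw [hoff2 _ (hi M (by omega)), hoff1 _ (fun j hj => hi j (by omega))]
      · intro j hj
        rcases Nat.lt_or_ge j M with h | h
        · have e : c2 (d*v+1+j) = c1 (d*v+1+j) :=
            hoff2 _ (fun hin => hdisj j _ h (inSub_self _ _) hin)
          refine ⟨by rw [e]; exact (hst1 j h).1, ?_⟩
          refine SubE_congr ?_ (hst1 j h).2
          intro i hi _
          exact hoff2 _ (fun hin => hdisj j _ h hi hin)
        · have e : j = M := by omega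
          subst e
          exact ⟨hend2, hsub2⟩
      · rw [hw2, hw1]
        push_cast
        ring

end FracProof
namespace FracProof
open Finset

def StF (d h k : ℕ) : Prop := ∀ v c, lev d h k v → Valid (S d h) c → c v = (0,0) →
    SubE d c v →
  ∃ c', Reach d (S d h) (weight (S d h) c + Bnd d k) c c' ∧ Valid (S d h) c' ∧
    (∀ i, ¬ inSub d v i → c' i = c i) ∧ c' v = (1,0) ∧ PileP d c' k v ∧
    weight (S d h) c' = weight (S d h) c + 1 + pl d k

def StH (d h k : ℕ) : Prop := ∀ v c, lev d h k v → Valid (S d h) c → c v = (0,0) →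
    SubE d c v →
  ∃ c', Reach d (S d h) (weight (S d h) c + Bnd d k + 1/2) c c' ∧ Valid (S d h) c' ∧
    (∀ i, ¬ inSub d v i → c' i = c i) ∧ c' v = (1/2,0) ∧ SubE d c' v ∧
    weight (S d h) c' = weight (S d h) c + 1/2

def StT (d h k : ℕ) : Prop := ∀ v c (a : ℝ), lev d h k v → Valid (S d h) c → c v = (0,a) →
    0 ≤ a → a ≤ 1/2 → SubE d c v →
  ∃ c', Reach d (S d h) (weight (S d h) c + Bnd d k + 1/2 - a) c c' ∧ Valid (S d h) c' ∧
    (∀ i, ¬ inSub d v i → c' i = c i) ∧ c' v = (0,0) ∧ SubE d c' v ∧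
    weight (S d h) c' = weight (S d h) c - a

def StP (d h k : ℕ) : Prop := ∀ v c, lev d h k v → Valid (S d h) c → PileP d c k v →
  ∃ c', Reach d (S d h) (weight (S d h) c + d) c c' ∧ Valid (S d h) c' ∧
    (∀ i, ¬ inSub d v i → c' i = c i) ∧ c' v = c v ∧ SubE d c' v ∧
    weight (S d h) c' = weight (S d h) c - pl d k

lemma v_lt_child {d v m : ℕ} (hd : 1 ≤ d) : v < d*v+1+m := by
  have hdv : v ≤ d * v := Nat.le_mul_of_pos_left v hd
  omega

lemma not_inSub_child_v {d v m : ℕ} (hd : 1 ≤ d) : ¬ inSub d (d*v+1+m) v := by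
  intro hin
  exact absurd (inSub_ge hd hin) (by have := v_lt_child (m := m) (v := v) hd; omega)

/-- place a full black pebble on a leaf -/
lemma leaf_full {d h : ℕ} (hd : 1 ≤ d) (hh : 1 ≤ h) {β : ℝ} (hβ0 : 0 ≤ β) (hβ1 : β ≤ 1) :
    ∀ u c, lev d h 1 u → Valid (S d h) c → c u = (0,0) → SubE d c u →
  ∃ c', Reach d (S d h) (weight (S d h) c + β) c c' ∧ Valid (S d h) c' ∧
    (∀ i, ¬ inSub d u i → c' i = c i) ∧ c' u = (β,0) ∧ SubE d c' u ∧
    weight (S d h) c' = weight (S d h) c + β := by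
  intro u c hlev hvc hcu hsub
  have hleaf : isLeaf d (S d h) u := lev_leaf hd hh hlev
  have h2 : (c u).2 = 0 := by rw [hcu]
  have h1 : (c u).1 = 0 := by rw [hcu]
  have hr : Reach d (S d h) (weight (S d h) c + β) c (Function.update c u (β, (c u).2)) := by
    refine reach_leaf hvc hleaf (by rw [h1]; exact hβ0) (by rw [h2]; linarith) ?_ ?_
    · linarith
    · rw [h1]; simp
  have hupd : Function.update c u (β, (c u).2) = Function.update c u (β, 0) := by rw [h2]
  rw [hupd] at hr
  refine ⟨Function.update c u (β, 0), hr, ?_, ?_, ?_, ?_, ?_⟩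
  · exact valid_update hvc hleaf.1 hβ0 le_rfl (by simp; linarith)
  · intro i hi
    have : i ≠ u := fun he => hi (he ▸ inSub_self d u)
    simp [Function.update, this]
  · simp [Function.update]
  · intro i hin hne
    rw [Function.update_of_ne hne]
    exact hsub i hin hne
  · rw [weight_update hleaf.1]
    rw [pw, h1, h2]; simp

/-- increase the white weight on a node carrying black 1/2 up to 1/2 -/
lemma white_step {d h : ℕ} (hd : 1 ≤ d) {k' : ℕ} (hk' : 1 ≤ k') (hkh : k' ≤ h) :
    ∀ u c, lev d h k' u → Valid (S d h) c → c u = (1/2,0) → SubE d c u →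
  ∃ c', Reach d (S d h) (weight (S d h) c + 1/2) c c' ∧ Valid (S d h) c' ∧
    (∀ i, ¬ inSub d u i → c' i = c i) ∧ c' u = (1/2,1/2) ∧ SubE d c' u ∧
    weight (S d h) c' = weight (S d h) c + 1/2 := by
  intro u c hlev hvc hcu hsub
  have hun : u < S d h := lev_lt_n hd hk' hkh hlev
  have h1 : (c u).1 = 1/2 := by rw [hcu]
  have h2 : (c u).2 = 0 := by rw [hcu]
  have hr : Reach d (S d h) (weight (S d h) c + 1/2) c
      (Function.update c u ((c u).1, 1/2)) := by
    refine reach_white hvc hun (by rw [h2]; norm_num) (by rw [h1]; norm_num) ?_ ?_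
    · linarith
    · rw [h2]; simp
  have hupd : Function.update c u ((c u).1, 1/2) = Function.update c u (1/2, 1/2) := by
    rw [h1]
  rw [hupd] at hr
  refine ⟨Function.update c u (1/2, 1/2), hr, ?_, ?_, ?_, ?_, ?_⟩
  · exact valid_update hvc hun (by norm_num) (by norm_num) (by norm_num)
  · intro i hi
    have : i ≠ u := fun he => hi (he ▸ inSub_self d u)
    simp [Function.update, this]
  · simp [Function.update]
  · intro i hin hne
    rw [Function.update_of_ne hne]
    exact hsub i hin hne
  · rw [weight_update hun]
    rw [pw, h1, h2]; simp; ring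

lemma StF_one {d h : ℕ} (hd : 1 ≤ d) (hh : 1 ≤ h) : StF d h 1 := by
  intro v c hlev hvc hcv hsub
  obtain ⟨c', hr, hv', hoff, hend, hsub', hw⟩ :=
    leaf_full hd hh (by norm_num : (0:ℝ) ≤ 1) le_rfl v c hlev hvc hcv hsub
  refine ⟨c', hr.mono ?_, hv', hoff, hend, hsub', ?_⟩
  · have := Bnd_ge_one (d := d) (k := 1) hd
    linarith
  · rw [hw, pl_le_two (by norm_num)]; ring

lemma StH_one {d h : ℕ} (hd : 1 ≤ d) (hh : 1 ≤ h) : StH d h 1 := by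
  intro v c hlev hvc hcv hsub
  obtain ⟨c', hr, hv', hoff, hend, hsub', hw⟩ :=
    leaf_full hd hh (by norm_num : (0:ℝ) ≤ 1/2) (by norm_num) v c hlev hvc hcv hsub
  refine ⟨c', hr.mono ?_, hv', hoff, hend, hsub', hw⟩
  have := Bnd_ge_one (d := d) (k := 1) hd
  linarith

end FracProof
namespace FracProof
open Finset

lemma Bnd_two (d : ℕ) : Bnd d 2 = (d:ℝ) := by rw [Bnd]; push_cast; ring

lemma cast_pred_half {d : ℕ} (hd : 1 ≤ d) : ((d-1:ℕ):ℝ) = (d:ℝ) - 1 := by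
  push_cast [hd]; ring

/-- Cover phase: bring all children of `v` to pebble weight 1. -/
lemma cover {d h k : ℕ} (hd : 2 ≤ d) (hk2 : 2 ≤ k) (hkh : k ≤ h)
    (ihH : StH d h (k-1)) (ihF : StF d h (k-1)) :
    ∀ v c, lev d h k v → Valid (S d h) c → SubE d c v →
    ∃ c', Reach d (S d h) (weight (S d h) c + Bnd d k) c c' ∧ Valid (S d h) c' ∧
      (∀ i, ¬ inSub d v i → c' i = c i) ∧ c' v = c v ∧
      (∀ m, m < d - 1 →
        c' (d*v+1+m) = (if 3 ≤ k then ((1:ℝ)/2, (1:ℝ)/2) else (1,0)) ∧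
        SubE d c' (d*v+1+m)) ∧
      c' (d*v+1+(d-1)) = (1,0) ∧ PileP d c' (k-1) (d*v+1+(d-1)) ∧
      weight (S d h) c' = weight (S d h) c + d + pl d (k-1) := by
  intro v c hlev hvc hsub
  set n := S d h with hn
  have hd1 : 1 ≤ d := by omega
  have hlevch : ∀ m, m < d → lev d h (k-1) (d*v+1+m) :=
    fun m hm => lev_child (by omega) hkh hlev hm
  have hchst : ∀ j, j < d → c (d*v+1+j) = (0,0) ∧ SubE d c (d*v+1+j) :=
    fun j hj => SubE_of_child hd1 hj hsub
  have hdisj : ∀ {j j' : ℕ} {i : ℕ}, j < d → j' < d → j ≠ j' →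
      inSub d (d*v+1+j) i → inSub d (d*v+1+j') i → False :=
    fun hj hj' hne h1 h2 => sib_disjoint hd1 hlev.1 hlev.2 hj hj' hne h1 h2
  have hnotv : ∀ {m : ℕ} {i : ℕ}, inSub d (d*v+1+m) i → i ≠ v := by
    intro m i hin he
    subst he
    exact not_inSub_child_v hd1 hin
  have hBk : Bnd d k = Bnd d (k-1) + ((d:ℝ)-1)/2 := Bnd_succ (by omega)
  have hdR : (1:ℝ) ≤ (d:ℝ) := by exact_mod_cast hd1
  by_cases hk3 : 3 ≤ k
  · -- halves on the first d-1 children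
    obtain ⟨c1, hr1, hv1, hoff1, hst1, hw1⟩ :=
      sib_loop hd1 hlev.1 hlev.2 (0,0) (1/2,0) (Bnd d (k-1) + 1/2) (1/2)
        (by
          intro u cc hu hvcc hcu hsubu
          obtain ⟨m, hm, rfl⟩ := hu
          obtain ⟨c', hr, hv', hoff, hend, hsub', hw⟩ :=
            ihH _ cc (hlevch m hm) hvcc hcu hsubu
          exact ⟨c', by rw [add_assoc] at hr; exact hr, hv', hoff, hend, hsub', hw⟩)
        (d-1) (by omega) (weight n c + Bnd d k) c hvc
        (fun j hj => hchst j (by omega))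
        (by have := Bnd_ge_one (d := d) (k := k) hd1; linarith)
        (by
          intro j hj
          have hjd : (j:ℝ) ≤ (d:ℝ) - 2 := by
            have : (j:ℝ) + 1 ≤ ((d-1:ℕ):ℝ) := by exact_mod_cast hj
            rw [cast_pred_half hd1] at this; linarith
          rw [hBk]; linarith)
    -- full pebble on the last child
    have hlast : c1 (d*v+1+(d-1)) = (0,0) := by
      rw [hoff1 _ (fun j hj hin => hdisj (by omega) (by omega) (by omega) hin
        (inSub_self _ _))]
      exact (hchst (d-1) (by omega)).1
    have hslast : SubE d c1 (d*v+1+(d-1)) := by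
      refine SubE_congr ?_ (hchst (d-1) (by omega)).2
      intro i hi _
      exact hoff1 _ (fun j hj hin => hdisj (by omega) (by omega) (by omega) hin hi)
    obtain ⟨c2, hr2, hv2, hoff2, hend2, hpile2, hw2⟩ :=
      ihF _ c1 (hlevch (d-1) (by omega)) hv1 hlast hslast
    have hr2' : Reach d n (weight n c + Bnd d k) c1 c2 := by
      refine hr2.mono ?_
      rw [hw1, cast_pred_half hd1, hBk]
      linarith
    -- whites on the first d-1 children
    obtain ⟨c3, hr3, hv3, hoff3, hst3, hw3⟩ :=
      sib_loop hd1 hlev.1 hlev.2 (1/2,0) (1/2,1/2) (1/2) (1/2)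
        (by
          intro u cc hu hvcc hcu hsubu
          obtain ⟨m, hm, rfl⟩ := hu
          exact white_step hd1 (by omega) (by omega) _ cc (hlevch m hm) hvcc hcu hsubu)
        (d-1) (by omega) (weight n c + Bnd d k) c2 hv2
        (by
          intro j hj
          have he : c2 (d*v+1+j) = c1 (d*v+1+j) :=
            hoff2 _ (fun hin => hdisj (by omega) (by omega) (by omega)
              (inSub_self _ _) hin)
          refine ⟨by rw [he]; exact (hst1 j hj).1, ?_⟩
          refine SubE_congr ?_ (hst1 j hj).2
          intro i hi _
          exact hoff2 _ (fun hin => hdisj (by omega) (by omega) (by omega) hi hin))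
        (by
          rw [hw2, hw1, cast_pred_half hd1, hBk]
          have hpl := pl_nonneg (d := d) (k := k-1) hd1
          have := d_pl_le_Bnd (d := d) (k := k) hd1 hk2
          rw [hBk] at this
          linarith)
        (by
          intro j hj
          have hjd : (j:ℝ) ≤ (d:ℝ) - 2 := by
            have : (j:ℝ) + 1 ≤ ((d-1:ℕ):ℝ) := by exact_mod_cast hj
            rw [cast_pred_half hd1] at this; linarith
          rw [hw2, hw1, cast_pred_half hd1]
          have := d_pl_le_Bnd (d := d) (k := k) hd1 hk2
          linarith)
    refine ⟨c3, (hr1.trans hr2').trans hr3, hv3, ?_, ?_, ?_, ?_, ?_, ?_⟩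
    · -- untouched outside subtree of v
      intro i hi
      have hni : ∀ m, m < d → ¬ inSub d (d*v+1+m) i :=
        fun m hm hin => hi (inSub_of_child hd1 hm hin)
      rw [hoff3 _ (fun j hj => hni j (by omega)),
        hoff2 _ (hni (d-1) (by omega)),
        hoff1 _ (fun j hj => hni j (by omega))]
    · -- v untouched
      rw [hoff3 _ (fun j hj hin => hnotv hin rfl),
        hoff2 _ (fun hin => hnotv hin rfl),
        hoff1 _ (fun j hj hin => hnotv hin rfl)]
    · -- first d-1 children
      intro m hm
      rw [if_pos hk3]
      exact hst3 m hm
    · -- last child black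
      rw [hoff3 _ (fun j hj hin => hdisj (by omega) (by omega) (by omega) hin
        (inSub_self _ _))]
      exact hend2
    · -- pile under the last child
      refine PileP_congr hd1 _ _ ?_ hpile2
      intro i hi _
      exact hoff3 _ (fun j hj hin => hdisj (by omega) (by omega) (by omega) hin hi)
    · -- weight
      rw [hw3, hw2, hw1, cast_pred_half hd1]
      ring
  · -- k = 2 : all children get full black pebbles
    have hk2' : k = 2 := by omega
    obtain ⟨c1, hr1, hv1, hoff1, hst1, hw1⟩ :=
      sib_loop hd1 hlev.1 hlev.2 (0,0) (1,0) 1 1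
        (by
          intro u cc hu hvcc hcu hsubu
          obtain ⟨m, hm, rfl⟩ := hu
          have hl1 : lev d h 1 (d*v+1+m) := by
            have := hlevch m hm; rwa [hk2'] at this
          exact leaf_full hd1 (by omega) (by norm_num) le_rfl _ cc hl1 hvcc hcu hsubu)
        d le_rfl (weight n c + Bnd d k) c hvc hchst
        (by have := Bnd_ge_one (d := d) (k := k) hd1; linarith)
        (by
          intro j hj
          have hjd : (j:ℝ) ≤ (d:ℝ) - 1 := by
            have : (j:ℝ) + 1 ≤ (d:ℝ) := by exact_mod_cast hj
            linarith
          rw [hk2', Bnd_two]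
          simp only [mul_one]
          linarith)
    refine ⟨c1, hr1, hv1, ?_, ?_, ?_, ?_, ?_, ?_⟩
    · intro i hi
      exact hoff1 _ (fun j hj hin => hi (inSub_of_child hd1 hj hin))
    · exact hoff1 _ (fun j hj hin => hnotv hin rfl)
    · intro m hm
      rw [if_neg hk3]
      exact hst1 m (by omega)
    · exact (hst1 (d-1) (by omega)).1
    · have : PileP d c1 1 (d*v+1+(d-1)) := (hst1 (d-1) (by omega)).2
      rw [hk2']
      exact this
    · rw [hw1, hk2', pl_le_two (by norm_num)]
      simp

end FracProof
namespace FracProof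
open Finset

lemma sum_range_split {M : ℕ} (hM : 1 ≤ M) (f : ℕ → ℝ) :
    ∑ m ∈ Finset.range M, f m = (∑ m ∈ Finset.range (M-1), f m) + f (M-1) := by
  conv_lhs => rw [show M = (M-1)+1 by omega]
  rw [Finset.sum_range_succ]

lemma slide_step {d h k : ℕ} (hd : 2 ≤ d) (hk2 : 2 ≤ k) (hkh : k ≤ h) {v : ℕ} {c3 : Cfg}
    (hlev : lev d h k v) (hv3 : Valid (S d h) c3)
    (hch : ∀ m, m < d - 1 →
      c3 (d*v+1+m) = (if 3 ≤ k then ((1:ℝ)/2, (1:ℝ)/2) else (1,0)) ∧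
      SubE d c3 (d*v+1+m))
    (hlast : c3 (d*v+1+(d-1)) = (1,0)) (hpile : PileP d c3 (k-1) (d*v+1+(d-1)))
    {β : ℝ} (hb : (c3 v).1 ≤ β) (hβ0 : 0 ≤ β) (hβ1 : β ≤ 1) :
    Move d (S d h) c3 (slideCfg d v β c3) ∧ Valid (S d h) (slideCfg d v β c3) ∧
    slideCfg d v β c3 v = (β, 0) ∧
    (∀ i, ¬ inSub d v i → slideCfg d v β c3 i = c3 i) ∧
    PileP d (slideCfg d v β c3) k v ∧
    weight (S d h) (slideCfg d v β c3)
      = weight (S d h) c3 + β - pw c3 v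
        - (((d:ℝ)-1) * (if 3 ≤ k then (1/2:ℝ) else 1) + 1) := by
  set n := S d h with hn
  have hd1 : 1 ≤ d := by omega
  have hvn : v < n := lev_lt_n hd1 (by omega) (by omega) hlev
  have hchn : d*v+d < n := lev_child_lt_n hd1 hk2 hkh hlev
  have hdisj : ∀ {j j' : ℕ} {i : ℕ}, j < d → j' < d → j ≠ j' →
      inSub d (d*v+1+j) i → inSub d (d*v+1+j') i → False :=
    fun hj hj' hne h1 h2 => sib_disjoint hd1 hlev.1 hlev.2 hj hj' hne h1 h2
  -- values of children
  have hval : ∀ m, m < d → c3 (d*v+1+m) = (if 3 ≤ k ∧ m < d - 1 then ((1:ℝ)/2, (1:ℝ)/2)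
      else (1,0)) := by
    intro m hm
    rcases Nat.lt_or_ge m (d-1) with h | h
    · rcases (hch m h).1 with he
      by_cases h3 : 3 ≤ k
      · rw [he, if_pos h3, if_pos ⟨h3, h⟩]
      · rw [he, if_neg h3, if_neg (by tauto)]
    · have : m = d - 1 := by omega
      subst this
      rw [hlast, if_neg (by omega)]
  have hcov : covered d c3 v := by
    intro j hj
    obtain ⟨m, hm, rfl⟩ := hj
    rw [pw, hval m hm]
    by_cases h3 : 3 ≤ k ∧ m < d - 1 <;> simp [h3] <;> norm_num
  have hmove : Move d n c3 (slideCfg d v β c3) := move_slide hd1 hv3 hvn hcov hb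
  have hvalid : Valid n (slideCfg d v β c3) := valid_slide hv3 hvn hchn hβ0 hβ1
  have hself : slideCfg d v β c3 v = (β, 0) := by simp [slideCfg]
  -- untouched off the subtree
  have hoth : ∀ i, ¬ inSub d v i → slideCfg d v β c3 i = c3 i := by
    intro i hi
    refine slideCfg_other (fun he => hi (he ▸ inSub_self d v)) ?_
    rintro ⟨hi1, hi2⟩
    exact hi (inSub_of_child hd1 (show i - (d*v+1) < d by omega)
      (by rw [show d*v+1+(i-(d*v+1)) = i by omega]; exact inSub_self d i))
  -- untouched strictly inside children subtrees
  have hdeep : ∀ m i, m < d → inSub d (d*v+1+m) i → i ≠ d*v+1+m →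
      slideCfg d v β c3 i = c3 i := by
    intro m i hm hin hne
    refine slideCfg_other (fun he => not_inSub_child_v hd1 (he ▸ hin)) ?_
    rintro ⟨hi1, hi2⟩
    have : i = d*v+1+(i-(d*v+1)) := by omega
    have hii : inSub d (d*v+1+(i-(d*v+1))) i := by
      rw [← this]; exact this ▸ inSub_self d i
    rcases eq_or_ne (i - (d*v+1)) m with he | hne'
    · rw [he] at this; omega
    · exact hdisj (by omega) hm hne' hii hin
  -- the resulting pile
  have hpile' : PileP d (slideCfg d v β c3) k v := by
    have hchval : ∀ m, m < d → slideCfg d v β c3 (d*v+1+m)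
        = (0, (c3 (d*v+1+m)).2) := fun m hm => slideCfg_child hm
    rcases Nat.lt_or_ge k 3 with hk3 | hk3
    · -- k = 2 : everything below v is empty
      have hk2' : k = 2 := by omega
      rw [hk2']
      show SubE d (slideCfg d v β c3) v
      intro i hin hne
      obtain ⟨m, hm, hin'⟩ := inSub_decomp hd1 hin hne
      rcases eq_or_ne i (d*v+1+m) with rfl | hne'
      · rw [hchval m hm, hval m hm, if_neg (by omega)]
      · rw [hdeep m i hm hin' hne']
        rcases Nat.lt_or_ge m (d-1) with h | h
        · exact (hch m h).2 i hin' hne'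
        · have : m = d - 1 := by omega
          subst this
          have hsub : SubE d c3 (d*v+1+(d-1)) := by
            have := hpile
            rw [show k - 1 = 1 by omega] at this
            exact this
          exact hsub i hin' hne'
    · -- k ≥ 3
      obtain ⟨k', rfl⟩ : ∃ k', k = k' + 3 := ⟨k - 3, by omega⟩
      refine ⟨?_, ?_, ?_⟩
      · intro m hm
        constructor
        · rw [hchval m (by omega), (hch m hm).1, if_pos (by omega)]
        · intro i hin hne
          rw [hdeep m i (by omega) hin hne]
          exact (hch m hm).2 i hin hne
      · rw [hchval (d-1) (by omega), hlast]
      · have : k' + 3 - 1 = k' + 2 := by omega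
        rw [this] at hpile
        refine PileP_congr hd1 _ _ ?_ hpile
        intro i hin hne
        exact hdeep (d-1) i (by omega) hin hne
  -- weight
  have hw : weight n (slideCfg d v β c3) = weight n c3 + β - pw c3 v
      - (((d:ℝ)-1) * (if 3 ≤ k then (1/2:ℝ) else 1) + 1) := by
    rw [weight_slide hd1 hvn hchn]
    have hsum : ∑ m ∈ Finset.range d, (c3 (d*v+1+m)).1
        = ((d:ℝ)-1) * (if 3 ≤ k then (1/2:ℝ) else 1) + 1 := by
      rw [sum_range_split hd1]
      have h1 : ∑ m ∈ Finset.range (d-1), (c3 (d*v+1+m)).1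
          = ∑ m ∈ Finset.range (d-1), (if 3 ≤ k then (1/2:ℝ) else 1) := by
        apply Finset.sum_congr rfl
        intro m hm
        simp only [Finset.mem_range] at hm
        rw [(hch m hm).1]
        by_cases h3 : 3 ≤ k <;> simp [h3]
      rw [h1, Finset.sum_const, hlast]
      rw [nsmul_eq_mul, Finset.card_range, cast_pred_half hd1]
    rw [hsum]
  exact ⟨hmove, hvalid, hself, hoth, hpile', hw⟩

end FracProof
namespace FracProof
open Finset

lemma StP_triv {d h k : ℕ} (hd : 1 ≤ d) (hk : k ≤ 2) : StP d h k := by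
  intro v c hlev hvc hpile
  have hsub : SubE d c v := by
    match k, hk, hpile with
    | 0, _, hp => exact hp
    | 1, _, hp => exact hp
    | 2, _, hp => exact hp
  have hd0 : (0:ℝ) ≤ (d:ℝ) := by positivity
  exact ⟨c, Reach.refl hvc (by linarith), hvc, fun i _ => rfl, rfl, hsub,
    by rw [pl_le_two hk]; ring⟩

lemma StP_step {d h k : ℕ} (hd : 2 ≤ d) (hk3 : 3 ≤ k) (hkh : k ≤ h)
    (ihP : StP d h (k-1)) (ihT : StT d h (k-1)) : StP d h k := by
  obtain ⟨k', rfl⟩ : ∃ k', k = k' + 3 := ⟨k-3, by omega⟩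
  have ek : k' + 3 - 1 = k' + 2 := by omega
  rw [ek] at ihP ihT
  intro v c hlev hvc hpile
  obtain ⟨h1, h2, h3⟩ := hpile
  set n := S d h with hn
  have hd1 : 1 ≤ d := by omega
  have hdR : (0:ℝ) ≤ (d:ℝ) := by positivity
  have hdisj : ∀ {j j' : ℕ} {i : ℕ}, j < d → j' < d → j ≠ j' →
      inSub d (d*v+1+j) i → inSub d (d*v+1+j') i → False :=
    fun hj hj' hne ha hb => sib_disjoint hd1 hlev.1 hlev.2 hj hj' hne ha hb
  have hnotv : ∀ {m : ℕ} {i : ℕ}, inSub d (d*v+1+m) i → i ≠ v := by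
    intro m i hin he
    subst he
    exact not_inSub_child_v hd1 hin
  have hlevch : ∀ m, m < d → lev d h (k'+2) (d*v+1+m) := by
    intro m hm
    have := lev_child (k := k'+3) (by omega) hkh hlev hm
    rwa [ek] at this
  have hplnn : 0 ≤ pl d (k'+2) := pl_nonneg hd1
  -- step 1 : clean the pile under the last child
  obtain ⟨c1, hr1, hv1, hoff1, hvv1, hsub1, hw1⟩ := ihP _ c (hlevch (d-1) (by omega)) hvc h3
  -- step 2 : discharge whites on the first d-1 children
  obtain ⟨c2, hr2, hv2, hoff2, hst2, hw2⟩ :=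
    sib_loop hd1 hlev.1 hlev.2 (0,1/2) (0,0) (Bnd d (k'+2)) (-(1/2))
      (by
        intro u cc hu hvcc hcu hsubu
        obtain ⟨m, hm, rfl⟩ := hu
        obtain ⟨c', hr, hv', hoff, hend, hsub', hw⟩ :=
          ihT _ cc (1/2) (hlevch m hm) hvcc hcu (by norm_num) le_rfl hsubu
        exact ⟨c', hr.mono (le_of_eq (by ring)), hv', hoff, hend, hsub',
          by rw [hw]; ring⟩)
      (d-1) (by omega) (weight n c + d) c1 hv1
      (by
        intro j hj
        have he : c1 (d*v+1+j) = c (d*v+1+j) :=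
          hoff1 _ (fun hin => hdisj (by omega) (by omega) (by omega) (inSub_self _ _) hin)
        refine ⟨by rw [he]; exact (h1 j hj).1, ?_⟩
        refine SubE_congr ?_ (h1 j hj).2
        intro i hi _
        exact hoff1 _ (fun hin => hdisj (by omega) (by omega) (by omega) hi hin))
      (by rw [hw1]; linarith)
      (by
        intro j hj
        rw [hw1]
        have hb := pl_add_d (d := d) (k := k'+2) (by omega)
        have hj0 : (0:ℝ) ≤ (j:ℝ) := by positivity
        linarith)
  have hr2' : Reach d n (weight n c + d) c c2 := hr1.trans hr2
  refine ⟨c2, hr2', hv2, ?_, ?_, ?_, ?_⟩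
  · -- untouched outside the subtree of v
    intro i hi
    rw [hoff2 _ (fun j hj hin => hi (inSub_of_child hd1 (by omega) hin)),
      hoff1 _ (fun hin => hi (inSub_of_child hd1 (by omega) hin))]
  · rw [hoff2 _ (fun j hj hin => absurd rfl (hnotv hin)),
      hoff1 _ (fun hin => absurd rfl (hnotv hin))]
  · -- subtree of v is empty
    intro i hin hne
    obtain ⟨m, hm, hin'⟩ := inSub_decomp hd1 hin hne
    rcases Nat.lt_or_ge m (d-1) with h | h
    · rcases eq_or_ne i (d*v+1+m) with rfl | hne'
      · exact (hst2 m h).1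
      · exact (hst2 m h).2 i hin' hne'
    · have hm' : m = d - 1 := by omega
      subst hm'
      have he : c2 i = c1 i :=
        hoff2 _ (fun j hj hin2 => hdisj (by omega) (by omega) (by omega) hin2 hin')
      rcases eq_or_ne i (d*v+1+(d-1)) with rfl | hne'
      · rw [he, hvv1, h2]
      · rw [he]; exact hsub1 i hin' hne'
  · -- weight
    rw [hw2, hw1, cast_pred_half hd1, pl_succ (show 3 ≤ k'+3 by omega), ek]
    ring

theorem master {d h : ℕ} (hd : 2 ≤ d) (hh : 1 ≤ h) :
    ∀ k, 1 ≤ k → k ≤ h → StF d h k ∧ StH d h k ∧ StP d h k ∧ (2 ≤ k → StT d h k) := by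
  intro k
  induction k using Nat.strong_induction_on with
  | _ k ih =>
    intro hk1 hkh
    have hd1 : 1 ≤ d := by omega
    rcases Nat.lt_or_ge k 2 with hk | hk2
    · have hk1' : k = 1 := by omega
      subst hk1'
      exact ⟨StF_one hd1 hh, StH_one hd1 hh, StP_triv hd1 (by omega), by omega⟩
    · obtain ⟨ihF, ihH, ihP, ihT⟩ := ih (k-1) (by omega) (by omega) (by omega)
      have hP : StP d h k := by
        rcases Nat.lt_or_ge k 3 with h3 | h3
        · exact StP_triv hd1 (by omega)
        · exact StP_step hd h3 hkh ihP (ihT (by omega))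
      have hcov := cover hd hk2 hkh ihH ihF
      set n := S d h with hn
      have key : (d:ℝ) + pl d (k-1) - (((d:ℝ)-1) * (if 3 ≤ k then (1/2:ℝ) else 1) + 1)
          = pl d k := by
        by_cases h3 : 3 ≤ k
        · rw [if_pos h3, pl_succ h3]; ring
        · rw [if_neg h3, pl_le_two (d := d) (k := k) (by omega),
            pl_le_two (d := d) (k := k-1) (by omega)]; ring
      have hdpl := d_pl_le_Bnd (d := d) (k := k) hd1 hk2
      have hpld := pl_add_d (d := d) (k := k) hk2
      have hdR : (1:ℝ) ≤ (d:ℝ) := by exact_mod_cast hd1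
      have hplnn : 0 ≤ pl d k := pl_nonneg hd1
      -- StF
      have hF : StF d h k := by
        intro v c hlev hvc hcv hsub
        obtain ⟨c3, hr3, hv3, hoff3, hvv3, hch3, hlast3, hpile3, hw3⟩ :=
          hcov v c hlev hvc hsub
        have hc3v : c3 v = (0,0) := by rw [hvv3, hcv]
        obtain ⟨hmove, hvalid, hself, hoth, hpile', hw⟩ :=
          slide_step hd hk2 hkh hlev hv3 hch3 hlast3 hpile3
            (β := 1) (by rw [hc3v]; norm_num) (by norm_num) le_rfl
        have hpwv : pw c3 v = 0 := by rw [pw, hc3v]; norm_num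
        have hw4 : weight n (slideCfg d v 1 c3) = weight n c + 1 + pl d k := by
          rw [hw, hw3, hpwv]; linarith [key]
        refine ⟨slideCfg d v 1 c3, hr3.trans (Reach.single hmove hv3 hvalid ?_ ?_), hvalid,
          ?_, hself, hpile', hw4⟩
        · rw [hw3]; linarith
        · rw [hw4]; linarith
        · intro i hi
          rw [hoth i hi, hoff3 i hi]
      -- StH
      have hH : StH d h k := by
        intro v c hlev hvc hcv hsub
        obtain ⟨c3, hr3, hv3, hoff3, hvv3, hch3, hlast3, hpile3, hw3⟩ :=
          hcov v c hlev hvc hsub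
        have hc3v : c3 v = (0,0) := by rw [hvv3, hcv]
        obtain ⟨hmove, hvalid, hself, hoth, hpile', hw⟩ :=
          slide_step hd hk2 hkh hlev hv3 hch3 hlast3 hpile3
            (β := 1/2) (by rw [hc3v]; norm_num) (by norm_num) (by norm_num)
        have hpwv : pw c3 v = 0 := by rw [pw, hc3v]; norm_num
        have hw4 : weight n (slideCfg d v (1/2) c3) = weight n c + 1/2 + pl d k := by
          rw [hw, hw3, hpwv]; linarith [key]
        obtain ⟨c5, hr5, hv5, hoff5, hvv5, hsub5, hw5⟩ :=
          hP v (slideCfg d v (1/2) c3) hlev hvalid hpile'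
        have hrmid : Reach d n (weight n c + Bnd d k + 1/2) c3 (slideCfg d v (1/2) c3) := by
          refine Reach.single hmove hv3 hvalid ?_ ?_
          · rw [hw3]; linarith
          · rw [hw4]; linarith
        have hr5' : Reach d n (weight n c + Bnd d k + 1/2) (slideCfg d v (1/2) c3) c5 := by
          refine hr5.mono ?_
          rw [hw4]; linarith
        refine ⟨c5, (hr3.mono (by linarith)).trans (hrmid.trans hr5'), hv5, ?_, ?_, hsub5, ?_⟩
        · intro i hi
          rw [hoff5 i hi, hoth i hi, hoff3 i hi]
        · rw [hvv5, hself]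
        · rw [hw5, hw4]; ring
      -- StT
      have hT : StT d h k := by
        intro v c a hlev hvc hcv ha0 ha1 hsub
        obtain ⟨c3, hr3, hv3, hoff3, hvv3, hch3, hlast3, hpile3, hw3⟩ :=
          hcov v c hlev hvc hsub
        have hc3v : c3 v = (0,a) := by rw [hvv3, hcv]
        obtain ⟨hmove, hvalid, hself, hoth, hpile', hw⟩ :=
          slide_step hd hk2 hkh hlev hv3 hch3 hlast3 hpile3
            (β := 0) (by rw [hc3v]) le_rfl (by norm_num)
        have hpwv : pw c3 v = a := by rw [pw, hc3v]; norm_num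
        have hw4 : weight n (slideCfg d v 0 c3) = weight n c - a + pl d k := by
          rw [hw, hw3, hpwv]; linarith [key]
        obtain ⟨c5, hr5, hv5, hoff5, hvv5, hsub5, hw5⟩ :=
          hP v (slideCfg d v 0 c3) hlev hvalid hpile'
        have hrmid : Reach d n (weight n c + Bnd d k + 1/2 - a) c3 (slideCfg d v 0 c3) := by
          refine Reach.single hmove hv3 hvalid ?_ ?_
          · rw [hw3]; linarith
          · rw [hw4]; linarith
        have hr5' : Reach d n (weight n c + Bnd d k + 1/2 - a) (slideCfg d v 0 c3) c5 := by
          refine hr5.mono ?_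
          rw [hw4]; linarith
        refine ⟨c5, (hr3.mono (by linarith)).trans (hrmid.trans hr5'), hv5, ?_, ?_, hsub5, ?_⟩
        · intro i hi
          rw [hoff5 i hi, hoth i hi, hoff3 i hi]
        · rw [hvv5, hself]
        · rw [hw5, hw4]; ring
      exact ⟨hF, hH, hP, fun _ => hT⟩

/-! ### Final assembly -/

lemma weight_empty (n : ℕ) : weight n (fun _ => ((0:ℝ),(0:ℝ))) = 0 := by
  simp [weight, pw]

lemma valid_empty (n : ℕ) : Valid n (fun _ => ((0:ℝ),(0:ℝ))) :=
  ⟨fun i => by simp [pw], fun i _ => rfl⟩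

lemma assemble {d n : ℕ} {W : ℝ} {cmid : Cfg}
    (h1 : Reach d n W (fun _ => ((0:ℝ),(0:ℝ))) cmid) (hmid : pw cmid 0 = 1)
    (h2 : Reach d n W cmid (fun _ => ((0:ℝ),(0:ℝ)))) :
    ∃ T f, RootPebbling d n T f ∧ ∀ t, t ≤ T → weight n (f t) ≤ W := by
  obtain ⟨T1, f1, e10, e1T, v1, w1, m1⟩ := h1
  obtain ⟨T2, f2, e20, e2T, v2, w2, m2⟩ := h2
  refine ⟨T1+T2, fun t => if t < T1 then f1 t else f2 (t - T1), ⟨⟨?_, ?_⟩, ?_, ?_, ?_⟩, ?_⟩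
  · intro t ht
    by_cases hlt : t < T1
    · simp only [if_pos hlt]; exact v1 t (by omega)
    · simp only [if_neg hlt]; exact v2 (t - T1) (by omega)
  · intro t ht
    by_cases hlt : t + 1 < T1
    · simp only [if_pos hlt, if_pos (show t < T1 by omega)]
      exact m1 t (by omega)
    · by_cases h2' : t < T1
      · have hT : t + 1 = T1 := by omega
        simp only [if_pos h2', if_neg hlt]
        have e : f2 (t + 1 - T1) = f1 (t + 1) := by
          rw [show t + 1 - T1 = 0 by omega, e20, ← e1T, hT]
        rw [e]
        exact m1 t (by omega)
      · simp only [if_neg hlt, if_neg h2']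
        rw [show t + 1 - T1 = (t - T1) + 1 by omega]
        exact m2 (t - T1) (by omega)
  · -- starts empty
    intro i
    by_cases hlt : 0 < T1
    · simp only [if_pos hlt, e10]
    · have hT : T1 = 0 := by omega
      simp only [if_neg hlt]
      rw [show 0 - T1 = 0 by omega, e20, ← e1T, hT, e10]
  · -- ends empty
    intro i
    have : ¬ (T1 + T2 < T1) := by omega
    simp only [if_neg this]
    rw [show T1 + T2 - T1 = T2 by omega, e2T]
  · -- at time T1 the root is pebbled
    refine ⟨T1, by omega, ?_⟩
    have : ¬ (T1 < T1) := by omega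
    simp only [if_neg this]
    rw [show T1 - T1 = 0 by omega, e20]
    exact hmid
  · intro t ht
    by_cases hlt : t < T1
    · simp only [if_pos hlt]; exact w1 t (by omega)
    · simp only [if_neg hlt]; exact w2 (t - T1) (by omega)


theorem frac_upper' (d h : ℕ) (hd : 2 ≤ d) (hh : 2 ≤ h) :
    ∃ T c, RootPebbling d (treeSize d h) T c ∧
      ∀ t, t ≤ T → weight (treeSize d h) (c t) ≤ ((d : ℝ) - 1) * h / 2 + 1 := by
  have hd1 : 1 ≤ d := by omega
  have hh1 : 1 ≤ h := by omega
  obtain ⟨hF, -, hP, -⟩ := FracProof.master (d := d) (h := h) hd hh1 h hh1 le_rfl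
  set n := treeSize d h with hn
  have hnS : n = S d h := rfl
  have hn1 : 1 ≤ n := by
    rw [hnS, ← S_one d]
    exact S_le hd1 hh1
  have hlev0 : lev d h h 0 := by
    constructor
    · rw [Nat.sub_self]; simp [S_zero]
    · rw [Nat.sub_self]; rw [S_one d]; omega
  set cE : Cfg := (fun _ => ((0:ℝ),(0:ℝ))) with hcE
  have hvE : Valid n cE := valid_empty n
  have hwE : weight n cE = 0 := weight_empty n
  obtain ⟨c1, hr1, hv1, hoff1, hc1v, hpile1, hw1⟩ :=
    hF 0 cE hlev0 hvE rfl (fun i _ _ => rfl)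
  rw [hwE] at hw1
  have hr1' : Reach d n (Bnd d h) cE c1 := hr1.mono (le_of_eq (by rw [hwE]; ring))
  have hpld := pl_add_d (d := d) (k := h) hh
  have hplnn := pl_nonneg (d := d) (k := h) hd1
  have hdR : (1:ℝ) ≤ (d:ℝ) := by exact_mod_cast hd1
  have hw1' : weight n c1 = 1 + pl d h := by rw [hw1]; ring
  -- remove the black pebble from the root
  have hc1v1 : (c1 0).1 = 1 := by rw [hc1v]
  have hc1v2 : (c1 0).2 = 0 := by rw [hc1v]
  have hpw1 : pw c1 0 = 1 := by rw [pw, hc1v1, hc1v2]; ring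
  set c2 : Cfg := Function.update c1 0 (0, (c1 0).2) with hc2
  have hr2 : Reach d n (Bnd d h) c1 c2 :=
    reach_blackdec hv1 (by omega) le_rfl (by rw [hc1v1]; norm_num)
      (by rw [hw1']; linarith)
  have hv2 : Valid n c2 := by
    refine valid_update hv1 (by omega) le_rfl ?_ ?_
    · rw [hc1v2]
    · rw [hc1v2]; norm_num
  have hc2v : c2 0 = (0,0) := by
    rw [hc2, Function.update_self, hc1v2]
  have hw2 : weight n c2 = pl d h := by
    rw [hc2, weight_update (by omega), hpw1, hc1v2]
    rw [hw1']; ring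
  have hpile2 : PileP d c2 h 0 := by
    refine PileP_congr hd1 h 0 ?_ hpile1
    intro i _ hne
    rw [hc2, Function.update_of_ne hne]
  obtain ⟨c5, hr5, hv5, hoff5, hvv5, hsub5, hw5⟩ := hP 0 c2 hlev0 hv2 hpile2
  have hr5' : Reach d n (Bnd d h) c2 c5 := by
    refine hr5.mono ?_
    rw [hw2]
    linarith
  have hc5E : c5 = cE := by
    funext i
    rcases eq_or_ne i 0 with rfl | hne
    · rw [hvv5, hc2v]
    · exact hsub5 i (inSub_zero hd1 i) hne
  have hr2nd : Reach d n (Bnd d h) c1 cE := by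
    rw [← hc5E]
    exact hr2.trans hr5'
  obtain ⟨T, f, hroot, hbound⟩ := assemble (d := d) (n := n) hr1' hpw1 hr2nd
  refine ⟨T, f, hroot, ?_⟩
  intro t ht
  have := hbound t ht
  rwa [Bnd] at this

end FracProof

/-- there is a fractional root-pebbling of the d-ary tree of height
h ≥ 2 (d ≥ 2) whose total weight never exceeds (d-1)·h/2 + 1. -/
theorem frac_upper (d h : ℕ) (hd : 2 ≤ d) (hh : 2 ≤ h) :
    ∃ T c, RootPebbling d (treeSize d h) T c ∧
      ∀ t, t ≤ T → weight (treeSize d h) (c t) ≤ ((d : ℝ) - 1) * h / 2 + 1 :=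
  FracProof.frac_upper' d h hd hh
end

section
/- In the fractional pebbling game on the balanced d-ary tree of height 3 (d ≥ 2), let π be a sub-root sub-pebbling with initial black subtree weight at most 1−ε, where ε ∈ (−1/2, 1/2], and let t* be a time at which all d children of the root have pebble weight 1. If the total pebble weight in the principal subtrees is at most (3/2)(d−1)+1−ε for all t ≤ t*, then there is a time t_b > t* at which the subtree pebble weight is at least (3/2)(d−1)+1+ε, and moreover the white subtree weight is at least 1/2+ε for all t in [t*, t_b]. -/
lemma white_dec_covered {d n : ℕ} {c c' : Cfg} (hm : Move d n c c') {j : ℕ}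
    (h : (c' j).2 < (c j).2) : covered d c j := by
  rcases hm with ⟨i, _, h2, h3⟩ | ⟨i, _, hcov, _, _, h3, h4⟩ | ⟨i, _, h2, h3⟩ | ⟨i, _, h2, _, h3⟩
  · rcases eq_or_ne j i with rfl | hne
    · rw [h2] at h; exact absurd h (lt_irrefl _)
    · rw [h3 j hne] at h; exact absurd h (lt_irrefl _)
  · rcases eq_or_ne j i with rfl | hne
    · exact hcov
    · by_cases hc : child d i j
      · rw [(h3 j hc).2] at h; exact absurd h (lt_irrefl _)
      · rw [h4 j hne hc] at h; exact absurd h (lt_irrefl _)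
  · rcases eq_or_ne j i with rfl | hne
    · exact absurd (lt_of_le_of_lt h2 h) (lt_irrefl _)
    · rw [h3 j hne] at h; exact absurd h (lt_irrefl _)
  · rcases eq_or_ne j i with rfl | hne
    · rw [h2] at h; exact absurd h (lt_irrefl _)
    · rw [h3 j hne] at h; exact absurd h (lt_irrefl _)

lemma black_inc_child {d n : ℕ} (hn : n = d*d+d+1) {c c' : Cfg} (hm : Move d n c c')
    {j : ℕ} (hj1 : 1 ≤ j) (hj2 : j ≤ d) (h : (c j).1 < (c' j).1) :
    covered d c j ∧ ∀ k, 1 ≤ k → k ≤ d → k ≠ j → c' k = c k := by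
  have hnotleaf : ¬ isLeaf d n j := by
    rintro ⟨_, hle⟩
    have := Nat.mul_le_mul (le_refl d) hj2
    omega
  have hnotchild : ∀ k, k ≤ d → ¬ child d j k := by
    rintro k hk ⟨m, hm1, rfl⟩
    have := Nat.mul_le_mul (le_refl d) hj1
    omega
  rcases hm with ⟨i, h1, _, h3⟩ | ⟨i, _, hcov, _, _, h3, h4⟩ | ⟨i, h1, _, h3⟩ | ⟨i, hi, _, _, h4⟩
  · rcases eq_or_ne j i with rfl | hne
    · exact absurd h (not_lt.mpr h1)
    · rw [h3 j hne] at h; exact absurd h (lt_irrefl _)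
  · rcases eq_or_ne j i with rfl | hne
    · exact ⟨hcov, fun k hk1 hk2 hkj => h4 k hkj (hnotchild k hk2)⟩
    · by_cases hc : child d i j
      · exact absurd h (not_lt.mpr (h3 j hc).1)
      · rw [h4 j hne hc] at h; exact absurd h (lt_irrefl _)
  · rcases eq_or_ne j i with rfl | hne
    · rw [h1] at h; exact absurd h (lt_irrefl _)
    · rw [h3 j hne] at h; exact absurd h (lt_irrefl _)
  · rcases eq_or_ne j i with rfl | hne
    · exact absurd hi hnotleaf
    · rw [h4 j hne] at h; exact absurd h (lt_irrefl _)

lemma mono_of_steps (g : ℕ → ℝ) (a : ℕ) : ∀ b, a ≤ b →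
    (∀ t, a ≤ t → t < b → g t ≤ g (t+1)) → g a ≤ g b := by
  intro b
  induction b with
  | zero => intro h _; rw [Nat.le_zero.mp h]
  | succ m ih =>
    intro hab hst
    rcases eq_or_lt_of_le hab with rfl | hlt
    · rfl
    · exact (ih (by omega) (fun t ht ht' => hst t ht (by omega))).trans
        (hst m (by omega) (by omega))

lemma exists_dec_step (g : ℕ → ℝ) (a b : ℕ) (hab : a ≤ b) (h : g b < g a) :
    ∃ t, a ≤ t ∧ t < b ∧ g (t+1) < g t := by
  by_contra hc
  push_neg at hc
  exact absurd (mono_of_steps g a b hab (fun t ht ht' => hc t ht ht')) (not_le.mpr h)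

lemma exists_greatest_lt {P : ℕ → Prop} (N : ℕ) (h : ∃ t, t < N ∧ P t) :
    ∃ t1, (t1 < N ∧ P t1) ∧ ∀ t, t1 < t → t < N → ¬ P t := by
  classical
  obtain ⟨t0, h1, h2⟩ := h
  refine ⟨Nat.findGreatest (fun t => t < N ∧ P t) N,
    Nat.findGreatest_spec (P := fun t => t < N ∧ P t) (le_of_lt h1) ⟨h1, h2⟩, ?_⟩
  intro t hgt hlt hP
  exact Nat.findGreatest_is_greatest (P := fun t => t < N ∧ P t) hgt (le_of_lt hlt) ⟨hlt, hP⟩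

lemma exists_least_nat {P : ℕ → Prop} (h : ∃ t, P t) :
    ∃ t1, P t1 ∧ ∀ t, t < t1 → ¬ P t := by
  classical
  exact ⟨Nat.find h, Nat.find_spec h, fun t ht => Nat.find_min h ht⟩

set_option maxHeartbeats 1000000

/-- base case of the induction hypothesis for the fractional lower
bound, on the d-ary tree of height 3 (min_3 = (3/2)(d-1)+1). -/
theorem frac_IH_base (d : ℕ) (hd : 2 ≤ d) (ε : ℝ) (hε1 : -(1 / 2) < ε) (hε2 : ε ≤ 1 / 2)
    (T : ℕ) (c : ℕ → Cfg) (tstar : ℕ)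
    (hp : Pebbling d (treeSize d 3) T c)
    (ht : tstar ≤ T)
    (hcov : ∀ j, child d 0 j → pw (c tstar) j = 1)
    (hinit : (∑ i ∈ Finset.Ico 1 (treeSize d 3), ((c 0) i).1) ≤ 1 - ε)
    (hend : ∀ i, ((c T) i).2 = 0)
    (hbound : ∀ t, t ≤ tstar →
      (∑ i ∈ Finset.Ico 1 (treeSize d 3), pw (c t) i) ≤ 3 / 2 * ((d : ℝ) - 1) + 1 - ε) :
    ∃ tb, tstar < tb ∧ tb ≤ T ∧
      3 / 2 * ((d : ℝ) - 1) + 1 + ε ≤ ∑ i ∈ Finset.Ico 1 (treeSize d 3), pw (c tb) i ∧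
      ∀ t, tstar ≤ t → t ≤ tb →
        1 / 2 + ε ≤ ∑ i ∈ Finset.Ico 1 (treeSize d 3), ((c t) i).2 := by
  classical
  obtain ⟨hpv, hpm⟩ := hp
  have hn : treeSize d 3 = d*d+d+1 := by
    simp [treeSize, Finset.sum_range_succ]; ring
  set n := treeSize d 3 with hns
  have hd2 : (2:ℝ) ≤ (d:ℝ) := by exact_mod_cast hd
  have hpwdef : ∀ (g : Cfg) i, pw g i = (g i).1 + (g i).2 := fun _ _ => rfl
  have hb0 : ∀ t, t ≤ T → ∀ i, 0 ≤ ((c t) i).1 := fun t htT i => ((hpv t htT).1 i).1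
  have hw0 : ∀ t, t ≤ T → ∀ i, 0 ≤ ((c t) i).2 := fun t htT i => ((hpv t htT).1 i).2.1
  have hpw0 : ∀ t, t ≤ T → ∀ i, 0 ≤ pw (c t) i := fun t htT i => by
    rw [hpwdef]; exact add_nonneg (hb0 t htT i) (hw0 t htT i)
  have hCsub : Finset.Ico 1 (d+1) ⊆ Finset.Ico 1 n := Finset.Ico_subset_Ico le_rfl (by omega)
  have hLsub : ∀ j, 1 ≤ j → j ≤ d → Finset.Ico (d*j+1) (d*j+1+d) ⊆ Finset.Ico 1 n := by
    intro j h1 h2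
    apply Finset.Ico_subset_Ico
    · omega
    · have := Nat.mul_le_mul (le_refl d) h2; omega
  have hLdisj : ∀ j, 1 ≤ j → Disjoint (Finset.Ico (d*j+1) (d*j+1+d)) (Finset.Ico 1 (d+1)) := by
    intro j h1
    rw [Finset.disjoint_left]
    intro x hx hx'
    rw [Finset.mem_Ico] at hx hx'
    have := Nat.mul_le_mul (le_refl d) h1
    omega
  have hLsum : ∀ t j, covered d (c t) j →
      ∑ m ∈ Finset.Ico (d*j+1) (d*j+1+d), pw (c t) m = d := by
    intro t j hc
    have he : ∀ m ∈ Finset.Ico (d*j+1) (d*j+1+d), pw (c t) m = 1 := by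
      intro m hm
      rw [Finset.mem_Ico] at hm
      exact hc m ⟨m - (d*j+1), by omega, by omega⟩
    rw [Finset.sum_congr rfl he, Finset.sum_const, Nat.card_Ico]
    have hce : d*j+1+d - (d*j+1) = d := by omega
    rw [hce, nsmul_eq_mul, mul_one]
  have hkey : ∀ t, t ≤ T → ∀ j, 1 ≤ j → j ≤ d → covered d (c t) j →
      ∀ S : Finset ℕ, S ⊆ Finset.Ico 1 (d+1) →
      (d:ℝ) + ∑ k ∈ S, pw (c t) k ≤ ∑ i ∈ Finset.Ico 1 n, pw (c t) i := by
    intro t htT j h1 h2 hc S hS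
    have hdisj : Disjoint (Finset.Ico (d*j+1) (d*j+1+d)) S :=
      Disjoint.mono_right hS (hLdisj j h1)
    have hsub : Finset.Ico (d*j+1) (d*j+1+d) ∪ S ⊆ Finset.Ico 1 n :=
      Finset.union_subset (hLsub j h1 h2) (hS.trans hCsub)
    calc (d:ℝ) + ∑ k ∈ S, pw (c t) k
        = ∑ m ∈ Finset.Ico (d*j+1) (d*j+1+d) ∪ S, pw (c t) m := by
          rw [Finset.sum_union hdisj, hLsum t j hc]
      _ ≤ ∑ i ∈ Finset.Ico 1 n, pw (c t) i :=
          Finset.sum_le_sum_of_subset_of_nonneg hsub (fun i _ _ => hpw0 t htT i)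
  have hCpw : ∑ k ∈ Finset.Ico 1 (d+1), pw (c tstar) k = d := by
    have he : ∀ k ∈ Finset.Ico 1 (d+1), pw (c tstar) k = 1 := by
      intro k hk
      rw [Finset.mem_Ico] at hk
      exact hcov k ⟨k - 1, by omega, by omega⟩
    rw [Finset.sum_congr rfl he, Finset.sum_const, Nat.card_Ico]
    simp
  have hsplit : ∑ k ∈ Finset.Ico 1 (d+1), pw (c tstar) k
      = (∑ k ∈ Finset.Ico 1 (d+1), ((c tstar) k).1)
        + ∑ k ∈ Finset.Ico 1 (d+1), ((c tstar) k).2 := by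
    rw [← Finset.sum_add_distrib]
    exact Finset.sum_congr rfl (fun k _ => hpwdef _ _)
  -- Step 1: lower bound on the white weight on root children at tstar
  have hWstar : ((d:ℝ)-1)/2 + ε ≤ ∑ k ∈ Finset.Ico 1 (d+1), ((c tstar) k).2 := by
    by_cases hA : ∃ t, t < tstar ∧ (∑ k ∈ Finset.Ico 1 (d+1), ((c t) k).1)
        < ∑ k ∈ Finset.Ico 1 (d+1), ((c (t+1)) k).1
    · -- some child's black weight was increased before tstar
      obtain ⟨t1, ⟨ht1lt, ht1inc⟩, hgreat⟩ := exists_greatest_lt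
        (P := fun t => (∑ k ∈ Finset.Ico 1 (d+1), ((c t) k).1)
          < ∑ k ∈ Finset.Ico 1 (d+1), ((c (t+1)) k).1) tstar hA
      have hj : ∃ j ∈ Finset.Ico 1 (d+1), ((c t1) j).1 < ((c (t1+1)) j).1 := by
        by_contra hcon
        push_neg at hcon
        exact absurd (Finset.sum_le_sum hcon) (not_le.mpr ht1inc)
      obtain ⟨j, hjC, hjinc⟩ := hj
      rw [Finset.mem_Ico] at hjC
      have hm1 : Move d n (c t1) (c (t1+1)) := hpm t1 (by omega)
      obtain ⟨hcovj, hoth2⟩ := black_inc_child hn hm1 hjC.1 (by omega) hjinc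
      -- blacks on children do not increase after t1
      have hstepmono : ∀ t, t1 < t → t < tstar → ∀ k ∈ Finset.Ico 1 (d+1),
          ((c (t+1)) k).1 ≤ ((c t) k).1 := by
        intro t htl htu k hk
        by_contra hcon
        push_neg at hcon
        rw [Finset.mem_Ico] at hk
        have hm' : Move d n (c t) (c (t+1)) := hpm t (by omega)
        obtain ⟨_, hoth⟩ := black_inc_child hn hm' hk.1 (by omega) hcon
        have hsum : (∑ m ∈ Finset.Ico 1 (d+1), ((c t) m).1)
            < ∑ m ∈ Finset.Ico 1 (d+1), ((c (t+1)) m).1 := by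
          apply Finset.sum_lt_sum
          · intro i hi
            rcases eq_or_ne i k with rfl | hne
            · exact le_of_lt hcon
            · rw [Finset.mem_Ico] at hi
              exact le_of_eq (by rw [hoth i hi.1 (by omega) hne])
          · exact ⟨k, Finset.mem_Ico.mpr ⟨hk.1, by omega⟩, hcon⟩
        exact hgreat t htl htu hsum
      have hblackmono : ∀ k ∈ Finset.Ico 1 (d+1), ∀ t, t1+1 ≤ t → t ≤ tstar →
          ((c t) k).1 ≤ ((c (t1+1)) k).1 := by
        intro k hk t
        induction t with
        | zero => intro h1 _; exact absurd h1 (by omega)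
        | succ m ih =>
          intro h1 h2
          rcases eq_or_lt_of_le h1 with heq | hlt
          · exact le_of_eq (by rw [heq])
          · exact (hstepmono m (by omega) (by omega) k hk).trans (ih (by omega) (by omega))
      have herase : ∀ k ∈ (Finset.Ico 1 (d+1)).erase j,
          1 - pw (c t1) k ≤ ((c tstar) k).2 := by
        intro k hk
        obtain ⟨hkj, hkC⟩ := Finset.mem_erase.mp hk
        have hkIco := Finset.mem_Ico.mp hkC
        have h1 : pw (c tstar) k = 1 := hcov k ⟨k - 1, by omega, by omega⟩
        have h2 : ((c tstar) k).1 ≤ ((c (t1+1)) k).1 := hblackmono k hkC tstar (by omega) le_rfl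
        have h3 : (c (t1+1)) k = (c t1) k := hoth2 k hkIco.1 (by omega) hkj
        rw [h3] at h2
        have h4 : 0 ≤ ((c t1) k).2 := hw0 t1 (by omega) k
        have h5 := hpwdef (c t1) k
        have h6 := hpwdef (c tstar) k
        linarith
      have hsum_erase_white : ∑ k ∈ (Finset.Ico 1 (d+1)).erase j, (1 - pw (c t1) k)
          ≤ ∑ k ∈ Finset.Ico 1 (d+1), ((c tstar) k).2 := by
        refine le_trans (Finset.sum_le_sum herase) ?_
        exact Finset.sum_le_sum_of_subset_of_nonneg (Finset.erase_subset _ _)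
          (fun i _ _ => hw0 tstar ht i)
      have hcard : ((Finset.Ico 1 (d+1)).erase j).card = d - 1 := by
        rw [Finset.card_erase_of_mem (Finset.mem_Ico.mpr ⟨hjC.1, hjC.2⟩), Nat.card_Ico]
        omega
      have hcast : ((d - 1 : ℕ) : ℝ) = (d:ℝ) - 1 := by
        rw [Nat.cast_sub (by omega)]; norm_num
      have hsum_erase_expand : ∑ k ∈ (Finset.Ico 1 (d+1)).erase j, (1 - pw (c t1) k)
          = ((d:ℝ) - 1) - ∑ k ∈ (Finset.Ico 1 (d+1)).erase j, pw (c t1) k := by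
        rw [Finset.sum_sub_distrib, Finset.sum_const, hcard, nsmul_eq_mul, mul_one, hcast]
      have hbound1 : (d:ℝ) + ∑ k ∈ (Finset.Ico 1 (d+1)).erase j, pw (c t1) k
          ≤ 3/2*((d:ℝ)-1)+1-ε := by
        refine le_trans (hkey t1 (by omega) j hjC.1 (by omega) hcovj _
          ((Finset.erase_subset _ _))) (hbound t1 (by omega))
      linarith
    · push_neg at hA
      have hmono := mono_of_steps (fun t => -(∑ k ∈ Finset.Ico 1 (d+1), ((c t) k).1)) 0 tstar
        (Nat.zero_le _) (fun t _ htl => neg_le_neg (hA t htl))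
      simp only [neg_le_neg_iff] at hmono
      have hB0 : (∑ k ∈ Finset.Ico 1 (d+1), ((c 0) k).1) ≤ 1 - ε :=
        le_trans (Finset.sum_le_sum_of_subset_of_nonneg hCsub
          (fun i _ _ => hb0 0 (Nat.zero_le _) i)) hinit
      linarith
  -- Step 2: locate the first white-decreasing step after tstar
  have hWpos : (0:ℝ) < ∑ k ∈ Finset.Ico 1 (d+1), ((c tstar) k).2 := by linarith
  have hgWT : (∑ k ∈ Finset.Ico 1 (d+1), ((c T) k).2) = 0 :=
    Finset.sum_eq_zero (fun k _ => hend k)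
  have hexdec := exists_dec_step (fun t => ∑ k ∈ Finset.Ico 1 (d+1), ((c t) k).2) tstar T ht
    (by simpa [hgWT] using hWpos)
  have hex2 : ∃ t, tstar ≤ t ∧ t < T ∧
      (∑ k ∈ Finset.Ico 1 (d+1), ((c (t+1)) k).2) < ∑ k ∈ Finset.Ico 1 (d+1), ((c t) k).2 :=
    hexdec
  obtain ⟨t2, ⟨ht2s, ht2T, ht2dec⟩, hmin⟩ := exists_least_nat hex2
  have hgWmono : ∀ s, tstar ≤ s → s ≤ t2 →
      (∑ k ∈ Finset.Ico 1 (d+1), ((c tstar) k).2) ≤ ∑ k ∈ Finset.Ico 1 (d+1), ((c s) k).2 := by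
    intro s hs1 hs2
    refine mono_of_steps (fun t => ∑ k ∈ Finset.Ico 1 (d+1), ((c t) k).2) tstar s hs1 ?_
    intro t ht1 ht2'
    by_contra hcon
    push_neg at hcon
    exact hmin t (by omega) ⟨ht1, by omega, hcon⟩
  have hj2 : ∃ j ∈ Finset.Ico 1 (d+1), ((c (t2+1)) j).2 < ((c t2) j).2 := by
    by_contra hcon
    push_neg at hcon
    exact absurd (Finset.sum_le_sum hcon) (not_le.mpr ht2dec)
  obtain ⟨j2, hj2C, hj2dec⟩ := hj2
  rw [Finset.mem_Ico] at hj2C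
  have hcov2 : covered d (c t2) j2 := white_dec_covered (hpm t2 ht2T) hj2dec
  have htlt : tstar < t2 := by
    rcases eq_or_lt_of_le ht2s with heq | h
    · exfalso
      have h1 : (d:ℝ) + ∑ k ∈ Finset.Ico 1 (d+1), pw (c t2) k
          ≤ ∑ i ∈ Finset.Ico 1 n, pw (c t2) i :=
        hkey t2 (by omega) j2 hj2C.1 (by omega) hcov2 _ (Finset.Subset.refl _)
      rw [← heq] at h1
      have h2 := hbound tstar le_rfl
      rw [hCpw] at h1
      linarith
    · exact h
  refine ⟨t2, htlt, le_of_lt ht2T, ?_, ?_⟩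
  · have h1 : (d:ℝ) + ∑ k ∈ Finset.Ico 1 (d+1), pw (c t2) k
        ≤ ∑ i ∈ Finset.Ico 1 n, pw (c t2) i :=
      hkey t2 (by omega) j2 hj2C.1 (by omega) hcov2 _ (Finset.Subset.refl _)
    have h2 : (∑ k ∈ Finset.Ico 1 (d+1), ((c t2) k).2)
        ≤ ∑ k ∈ Finset.Ico 1 (d+1), pw (c t2) k :=
      Finset.sum_le_sum (fun k _ => by
        rw [hpwdef]; exact le_add_of_nonneg_left (hb0 t2 (by omega) k))
    have h3 := hgWmono t2 (le_of_lt htlt) le_rfl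
    linarith
  · intro t htt1 htt2
    have h1 : (∑ k ∈ Finset.Ico 1 (d+1), ((c t) k).2)
        ≤ ∑ i ∈ Finset.Ico 1 n, ((c t) i).2 :=
      Finset.sum_le_sum_of_subset_of_nonneg hCsub (fun i _ _ => hw0 t (by omega) i)
    have h2 := hgWmono t htt1 htt2
    linarith
end

section
/- Any fractional pebbling of a DAG that uses black sliding moves and has maximum weight P at any time can be converted into a fractional pebbling without black sliding moves, achieving the same final configuration and reaching the same root-pebbling goal, whose maximum weight at any time is at most P + 1. -/
/-- Every child of i (w.r.t. the child relation chl) has pebble weight 1. -/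
def coveredD (chl : ℕ → ℕ → Prop) (c : Cfg) (i : ℕ) : Prop := ∀ j, chl i j → pw c j = 1

/-- A leaf is a node with no children. -/
def isLeafD (chl : ℕ → ℕ → Prop) (i : ℕ) : Prop := ∀ j, ¬ chl i j

/-- Fractional pebbling moves on a DAG, with black sliding moves allowed. -/
def MoveD (n : ℕ) (chl : ℕ → ℕ → Prop) (c c' : Cfg) : Prop :=
  (∃ i, (c' i).1 ≤ (c i).1 ∧ (c' i).2 = (c i).2 ∧ ∀ j, j ≠ i → c' j = c j) ∨
  (∃ i, i < n ∧ coveredD chl c i ∧ (c i).1 ≤ (c' i).1 ∧ (c' i).2 = 0 ∧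
    (∀ j, chl i j → (c' j).1 ≤ (c j).1 ∧ (c' j).2 = (c j).2) ∧
    (∀ j, j ≠ i → ¬ chl i j → c' j = c j)) ∨
  (∃ i, (c' i).1 = (c i).1 ∧ (c i).2 ≤ (c' i).2 ∧ ∀ j, j ≠ i → c' j = c j) ∨
  (∃ i, i < n ∧ isLeafD chl i ∧ (c' i).2 = (c i).2 ∧ (c i).1 ≤ (c' i).1 ∧
    ∀ j, j ≠ i → c' j = c j)

/-- Fractional pebbling moves on a DAG without black sliding moves: placing black
weight on a covered node leaves all other nodes unchanged. -/
def MoveDNS (n : ℕ) (chl : ℕ → ℕ → Prop) (c c' : Cfg) : Prop :=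
  (∃ i, (c' i).1 ≤ (c i).1 ∧ (c' i).2 = (c i).2 ∧ ∀ j, j ≠ i → c' j = c j) ∨
  (∃ i, i < n ∧ coveredD chl c i ∧ (c i).1 ≤ (c' i).1 ∧ (c' i).2 = 0 ∧
    (∀ j, j ≠ i → c' j = c j)) ∨
  (∃ i, (c' i).1 = (c i).1 ∧ (c i).2 ≤ (c' i).2 ∧ ∀ j, j ≠ i → c' j = c j) ∨
  (∃ i, i < n ∧ isLeafD chl i ∧ (c' i).2 = (c i).2 ∧ (c i).1 ≤ (c' i).1 ∧
    ∀ j, j ≠ i → c' j = c j)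


theorem moveDNS_refl (n : ℕ) (chl : ℕ → ℕ → Prop) (c : Cfg) : MoveDNS n chl c c :=
  Or.inl ⟨0, le_refl _, rfl, fun _ _ => rfl⟩

theorem convert_move (n : ℕ) (chl : ℕ → ℕ → Prop) (P : ℝ) (a b : Cfg)
    (ha : Valid n a) (hb : Valid n b) (hm : MoveD n chl a b)
    (hwa : weight n a ≤ P) (hwb : weight n b ≤ P) :
    ∃ (L : ℕ) (d : ℕ → Cfg), d 0 = a ∧ d L = b ∧
      (∀ t, t ≤ L → Valid n (d t)) ∧
      (∀ t, t < L → MoveDNS n chl (d t) (d (t + 1))) ∧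
      (∀ t, t ≤ L → weight n (d t) ≤ P + 1) := by
  classical
  have easy : MoveDNS n chl a b → ∃ (L : ℕ) (d : ℕ → Cfg), d 0 = a ∧ d L = b ∧
      (∀ t, t ≤ L → Valid n (d t)) ∧
      (∀ t, t < L → MoveDNS n chl (d t) (d (t + 1))) ∧
      (∀ t, t ≤ L → weight n (d t) ≤ P + 1) := by
    intro hm'
    refine ⟨1, fun t => if t = 0 then a else b, by simp, by simp, ?_, ?_, ?_⟩
    · intro t ht
      by_cases h : t = 0 <;> simp [h, ha, hb]
    · intro t ht
      interval_cases t
      simpa using hm'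
    · intro t ht
      by_cases h : t = 0 <;> simp [h] <;> linarith
  rcases hm with h | hs | h | h
  · exact easy (Or.inl h)
  · obtain ⟨i, hin, hcov, hb1, hb2, hch, hoth⟩ := hs
    have hchild_lt : ∀ j, chl i j → j < n := by
      intro j hj
      by_contra h
      have h0 : a j = (0, 0) := ha.2 j (le_of_not_gt h)
      have h1 := hcov j hj
      simp [pw, h0] at h1
    set d : ℕ → Cfg := fun s j =>
      if s = 0 then a j else if j = i ∨ (chl i j ∧ j + 1 < s) then b j else a j with hdd
    have hd0 : d 0 = a := funext fun j => by simp [hdd]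
    have hds : ∀ s j, s ≠ 0 →
        d s j = if j = i ∨ (chl i j ∧ j + 1 < s) then b j else a j := by
      intro s j hs; simp [hdd, hs]
    have hdL : d (n + 1) = b := by
      funext j
      rw [hds _ _ (by omega)]
      by_cases hji : j = i
      · simp [hji]
      · by_cases hcj : chl i j
        · have hjn := hchild_lt j hcj
          rw [if_pos (Or.inr ⟨hcj, by omega⟩)]
        · rw [if_neg (by simp [hji, hcj])]
          exact (hoth j hji hcj).symm
    refine ⟨n + 1, d, hd0, hdL, ?_, ?_, ?_⟩
    · -- validity
      intro t ht
      by_cases ht0 : t = 0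
      · rw [ht0, hd0]; exact ha
      · constructor
        · intro j
          have hbj := hb.1 j
          have haj := ha.1 j
          simp only [pw] at hbj haj ⊢
          rw [hds t j ht0]
          by_cases h : j = i ∨ (chl i j ∧ j + 1 < t)
          · rw [if_pos h]; exact hbj
          · rw [if_neg h]; exact haj
        · intro j hj
          rw [hds t j ht0]
          by_cases h : j = i ∨ (chl i j ∧ j + 1 < t)
          · simp only [if_pos h]; exact hb.2 j hj
          · simp only [if_neg h]; exact ha.2 j hj
    · -- moves
      intro t ht
      by_cases ht0 : t = 0
      · subst ht0
        refine Or.inr (Or.inl ⟨i, hin, ?_, ?_, ?_, ?_⟩)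
        · rw [hd0]; exact hcov
        · rw [hd0, hds 1 i (by omega)]; simpa using hb1
        · rw [hds 1 i (by omega)]; simpa using hb2
        · intro j hj
          rw [hd0, hds 1 j (by omega), if_neg]
          rintro (h | ⟨-, h⟩)
          · exact hj h
          · omega
      · obtain ⟨k, rfl⟩ := Nat.exists_eq_succ_of_ne_zero ht0
        have hsame : ∀ j, j ≠ k → d (k + 1 + 1) j = d (k + 1) j := by
          intro j hj
          rw [hds _ _ (by omega), hds _ _ (by omega)]
          by_cases hji : j = i
          · simp [hji]
          · have : (j + 1 < k + 1 + 1) ↔ (j + 1 < k + 1) := by omega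
            simp [hji, this]
        by_cases hck : chl i k ∧ k ≠ i
        · have hnk : ¬ (k = i ∨ (chl i k ∧ k + 1 < k + 1)) := by
            rintro (h | ⟨-, h⟩)
            · exact hck.2 h
            · omega
          have e1 : d (k + 1) k = a k := by rw [hds _ _ (by omega), if_neg hnk]
          have e2 : d (k + 1 + 1) k = b k := by
            rw [hds _ _ (by omega), if_pos (Or.inr ⟨hck.1, by omega⟩)]
          refine Or.inl ⟨k, ?_, ?_, hsame⟩
          · rw [e1, e2]; exact (hch k hck.1).1
          · rw [e1, e2]; exact (hch k hck.1).2
        · have heq : d (k + 1 + 1) = d (k + 1) := by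
            funext j
            by_cases hj : j = k
            · subst hj
              rw [hds _ _ (by omega), hds _ _ (by omega)]
              by_cases hji : j = i
              · simp [hji]
              · have hnc : ¬ chl i j := fun hc => hji ((not_and_or.mp hck).elim
                  (fun h => absurd hc h) (fun h => by simpa using h))
                simp [hji, hnc]
            · exact hsame j hj
          rw [heq]; exact moveDNS_refl n chl _
    · -- weight
      intro t ht
      by_cases ht0 : t = 0
      · rw [ht0, hd0]; linarith
      · have hpt : ∀ j ∈ Finset.range n,
            pw (d t) j ≤ pw a j + (if j = i then (1:ℝ) else 0) := by
          intro j hj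
          simp only [pw]
          rw [hds t j ht0]
          by_cases hji : j = i
          · subst hji
            simp only [eq_self_iff_true, true_or, if_true]
            have h1 := (hb.1 j).2.2
            have h2 := (ha.1 j).1
            have h3 := (ha.1 j).2.1
            simp only [pw] at h1 ⊢
            linarith
          · by_cases hc : chl i j ∧ j + 1 < t
            · simp only [if_pos (Or.inr hc), if_neg hji]
              have h1 := (hch j hc.1).1
              have h2 := (hch j hc.1).2
              linarith
            · have hn : ¬ (j = i ∨ (chl i j ∧ j + 1 < t)) := by tauto
              rw [if_neg hn, if_neg hji]
              simp
        have hsum : weight n (d t) ≤ weight n a + 1 := by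
          rw [weight, weight]
          calc ∑ j ∈ Finset.range n, pw (d t) j
              ≤ ∑ j ∈ Finset.range n, (pw a j + (if j = i then (1:ℝ) else 0)) :=
                Finset.sum_le_sum hpt
            _ = (∑ j ∈ Finset.range n, pw a j) + 1 := by
                rw [Finset.sum_add_distrib, Finset.sum_ite_eq' (Finset.range n) i
                  (fun _ => (1:ℝ))]
                simp [Finset.mem_range.mpr hin]
        linarith
  · exact easy (Or.inr (Or.inr (Or.inl h)))
  · exact easy (Or.inr (Or.inr (Or.inr h)))

/-- a fractional pebbling of a DAG using black sliding moves with
maximum weight P can be converted into one without sliding moves, with the same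
initial and final configurations and reaching the same root-pebbling goal, whose
maximum weight is at most P + 1. -/
theorem remove_sliding_moves (n : ℕ) (chl : ℕ → ℕ → Prop) (r : ℕ) (hr : r < n)
    (hacyc : ∀ i, ¬ Relation.TransGen chl i i)
    (T : ℕ) (c : ℕ → Cfg) (P : ℝ)
    (hval : ∀ t, t ≤ T → Valid n (c t))
    (hmove : ∀ t, t < T → MoveD n chl (c t) (c (t + 1)))
    (hP : ∀ t, t ≤ T → weight n (c t) ≤ P) :
    ∃ (T' : ℕ) (c' : ℕ → Cfg), (∀ t, t ≤ T' → Valid n (c' t)) ∧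
      (∀ t, t < T' → MoveDNS n chl (c' t) (c' (t + 1))) ∧
      c' 0 = c 0 ∧ c' T' = c T ∧
      ((∃ t, t ≤ T ∧ pw (c t) r = 1) → ∃ t, t ≤ T' ∧ pw (c' t) r = 1) ∧
      ∀ t, t ≤ T' → weight n (c' t) ≤ P + 1 := by
  classical
  revert hval hmove hP
  induction T with
  | zero =>
      intro hval hmove hP
      refine ⟨0, c, hval, fun t ht => absurd ht (by omega), rfl, rfl, fun h => h, ?_⟩
      intro t ht
      have := hP t ht
      linarith
  | succ T ih =>
      intro hval hmove hP
      obtain ⟨T', c', h1, h2, h3, h4, h5, h6⟩ :=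
        ih (fun t ht => hval t (by omega)) (fun t ht => hmove t (by omega))
          (fun t ht => hP t (by omega))
      obtain ⟨L, d, hd0, hdL, hdv, hdm, hdw⟩ :=
        convert_move n chl P (c T) (c (T + 1)) (hval T (by omega)) (hval (T + 1) le_rfl)
          (hmove T (by omega)) (hP T (by omega)) (hP (T + 1) le_rfl)
      set e : ℕ → Cfg := fun t => if t ≤ T' then c' t else d (t - T') with hee
      have he1 : ∀ t, t ≤ T' → e t = c' t := by intro t ht; simp [hee, ht]
      have he2 : ∀ t, T' ≤ t → e t = d (t - T') := by
        intro t htt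
        rcases eq_or_lt_of_le htt with rfl | h
        · simp only [hee, le_refl, if_pos, Nat.sub_self, hd0]
          rw [h4]
        · simp [hee, Nat.not_le.mpr h]
      have heL : e (T' + L) = c (T + 1) := by
        rw [he2 _ (by omega), Nat.add_sub_cancel_left, hdL]
      refine ⟨T' + L, e, ?_, ?_, ?_, heL, ?_, ?_⟩
      · intro t ht
        by_cases h : t ≤ T'
        · rw [he1 t h]; exact h1 t h
        · rw [he2 t (by omega)]; exact hdv (t - T') (by omega)
      · intro t ht
        by_cases h : t + 1 ≤ T'
        · rw [he1 t (by omega), he1 (t + 1) h]; exact h2 t (by omega)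
        · have hT't : T' ≤ t := by omega
          rw [he2 t hT't, he2 (t + 1) (by omega)]
          have : t + 1 - T' = (t - T') + 1 := by omega
          rw [this]
          exact hdm (t - T') (by omega)
      · rw [he1 0 (by omega)]; exact h3
      · rintro ⟨t, ht, hpw⟩
        by_cases htT : t ≤ T
        · obtain ⟨t', ht', hpw'⟩ := h5 ⟨t, htT, hpw⟩
          exact ⟨t', by omega, by rw [he1 t' ht']; exact hpw'⟩
        · have : t = T + 1 := by omega
          subst this
          exact ⟨T' + L, le_rfl, by rw [heL]; exact hpw⟩
      · intro t ht
        by_cases h : t ≤ T'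
        · rw [he1 t h]; exact h6 t h
        · rw [he2 t (by omega)]; exact hdw (t - T') (by omega)
end

section
/- If π₁ is a fractional sub-pebbling of a tree starting with some initial white and black pebble weight such that the total weight never exceeds P, then there exists a fractional sub-pebbling π₂ with the same initial black pebble weight and zero initial white pebble weight, achieving the same goal, whose total weight also never exceeds P. -/
/-- if a fractional sub-pebbling starts with some initial white and
black weight and never exceeds total weight P, there is a sub-pebbling with the
same initial black weight and no initial white weight, achieving the same goal,
that also never exceeds total weight P. -/
theorem initial_white_useless (d n : ℕ) (T : ℕ) (c : ℕ → Cfg) (P : ℝ)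
    (hp : Pebbling d n T c)
    (hend : ∀ i, ((c T) i).2 = 0)
    (hP : ∀ t, t ≤ T → weight n (c t) ≤ P) :
    ∃ T' c', Pebbling d n T' c' ∧
      (∀ i, ((c' 0) i).1 = ((c 0) i).1 ∧ ((c' 0) i).2 = 0) ∧
      c' T' = c T ∧
      ((∃ t, t ≤ T ∧ pw (c t) 0 = 1) → ∃ t, t ≤ T' ∧ pw (c' t) 0 = 1) ∧
      ∀ t, t ≤ T' → weight n (c' t) ≤ P := by
  obtain ⟨hv, hm⟩ := hp
  have hv0 := hv 0 (Nat.zero_le T)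
  set g : ℕ → Cfg := fun t i => if i < t then c 0 i else ((c 0 i).1, (0:ℝ)) with hg
  set c' : ℕ → Cfg := fun t => if t < n then g t else c (t - n) with hc'
  have hgn : g n = c 0 := by
    funext i
    by_cases h : i < n
    · simp [hg, h]
    · have h2 := hv0.2 i (by omega)
      simp [hg, h, h2]
  have hct : ∀ t, t ≤ n → c' t = g t := by
    intro t ht
    by_cases h : t < n
    · simp [hc', h]
    · have : t = n := by omega
      subst this
      simp [hc', hgn]
  have hct2 : ∀ t, n ≤ t → c' t = c (t - n) := by
    intro t ht
    by_cases h : t < n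
    · omega
    · simp [hc', h]
  have hgvalid : ∀ t, Valid n (g t) := by
    intro t
    constructor
    · intro i
      obtain ⟨h1, h2, h3⟩ := hv0.1 i
      by_cases h : i < t
      · refine ⟨by simp [hg, h]; exact h1, by simp [hg, h]; exact h2, ?_⟩
        simp only [pw, hg]
        rw [if_pos h]
        simpa [pw] using h3
      · refine ⟨by simpa [hg, h] using h1, by simp [hg, h], ?_⟩
        simp only [pw, hg]
        rw [if_neg h]
        simp only [pw] at h3
        calc (c 0 i).1 + 0 ≤ (c 0 i).1 + (c 0 i).2 := by linarith
          _ ≤ 1 := h3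
    · intro i hi
      have h2 := hv0.2 i hi
      by_cases h : i < t <;> simp [hg, h, h2]
  have hgw : ∀ t, weight n (g t) ≤ weight n (c 0) := by
    intro t
    apply Finset.sum_le_sum
    intro i _
    obtain ⟨h1, h2, h3⟩ := hv0.1 i
    by_cases h : i < t
    · simp [pw, hg, h]
    · simp only [pw, hg]
      rw [if_neg h]
      simp only [pw]
      simp
      linarith
  refine ⟨n + T, c', ⟨?_, ?_⟩, ?_, ?_, ?_, ?_⟩
  · -- validity
    intro t ht
    by_cases h : t ≤ n
    · rw [hct t h]; exact hgvalid t
    · rw [hct2 t (by omega)]; exact hv (t - n) (by omega)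
  · -- moves
    intro t ht
    by_cases h : t + 1 ≤ n
    · rw [hct t (by omega), hct (t+1) h]
      right; right; left
      refine ⟨t, ?_, ?_, ?_⟩
      · simp [hg, Nat.lt_succ_self]
      · have h2 := (hv0.1 t).2.1
        simp only [hg]
        rw [if_neg (by omega), if_pos (Nat.lt_succ_self t)]
        simpa using h2
      · intro j hj
        by_cases hjt : j < t
        · simp [hg, hjt, Nat.lt_succ_of_lt hjt]
        · have : ¬ j < t + 1 := by omega
          simp [hg, hjt, this]
    · rw [hct2 t (by omega), hct2 (t+1) (by omega)]
      have : t + 1 - n = t - n + 1 := by omega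
      rw [this]
      exact hm (t - n) (by omega)
  · intro i
    rcases Nat.eq_zero_or_pos n with h | h
    · have := hct2 0 (by omega)
      rw [this]
      have h2 := hv0.2 i (by omega)
      simp [h2]
    · rw [hct 0 (Nat.zero_le n)]
      simp [hg]
  · rw [hct2 (n + T) (by omega)]
    have hTT : n + T - n = T := by omega
    rw [hTT]
  · rintro ⟨t, ht, hroot⟩
    refine ⟨n + t, by omega, ?_⟩
    rw [hct2 (n + t) (by omega)]
    have htt : n + t - n = t := by omega
    rw [htt]
    exact hroot
  · intro t ht
    by_cases h : t ≤ n
    · rw [hct t h]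
      exact le_trans (hgw t) (hP 0 (Nat.zero_le T))
    · rw [hct2 t (by omega)]
      exact hP (t - n) (by omega)
end
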